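/- arXiv:2512.12890 — 8 statements merged into one kernel-verified Lean document; each statement's English description precedes it below -/
import Mathlib

section
/- Let a, b, c, d ≥ 0 be integers with b + c = a + d, and let z, w be complex numbers with (1-w)(1-z) = 1 (i.e. w = z/(z-1)). Then (1/a!) dᵃ/dzᵃ (z^b (1-z)^c) = (-1)^{a+b} (1-w)^{a+1} · (1/a!) dᵃ/dwᵃ (w^b / (1-w)^{d+1}). -/
open scoped Nat
open Finset

noncomputable def pch (m : ℤ) (j : ℕ) : ℂ := ∏ i ∈ Finset.range j, ((m : ℂ) - (i : ℕ))
lemma pch_zero (m : ℤ) : pch m 0 = 1 := by simp [pch]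

lemma pch_succ (m : ℤ) (j : ℕ) : pch m (j + 1) = pch m j * ((m : ℂ) - (j : ℕ)) := by
  simp [pch, Finset.prod_range_succ]

lemma pch_natCast (c j : ℕ) : pch (c : ℤ) j = (c.descFactorial j : ℂ) := by
  induction j with
  | zero => simp [pch_zero]
  | succ j ih =>
      rw [pch_succ, ih, Nat.descFactorial_succ]
      by_cases hj : j ≤ c
      · push_cast [hj]; ring
      · have h0 : c.descFactorial j = 0 := Nat.descFactorial_eq_zero_iff_lt.mpr (by omega)
        simp [h0]

lemma pch_neg (d j : ℕ) : (-1 : ℂ) ^ j * pch (-(d + 1 : ℕ) : ℤ) j = ((d + j).descFactorial j : ℂ) := by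
  induction j with
  | zero => simp [pch_zero]
  | succ j ih =>
      have : d + (j + 1) = (d + j) + 1 := by omega
      rw [pch_succ, this, Nat.succ_descFactorial_succ]
      push_cast
      rw [← ih]
      push_cast
      ring

lemma sum_triangle (n : ℕ) (f : ℕ → ℕ → ℂ) :
    ∑ j ∈ range (n + 1), ∑ i ∈ range (n + 1 - j), f j i
      = ∑ k ∈ range (n + 1), ∑ j ∈ range (k + 1), f j (k - j) := by
  rw [Finset.sum_sigma', Finset.sum_sigma']
  refine Finset.sum_nbij' (fun p => ⟨p.1 + p.2, p.1⟩) (fun p => ⟨p.2, p.1 - p.2⟩) ?_ ?_ ?_ ?_ ?_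
  · rintro ⟨j, i⟩ hm
    simp only [Finset.mem_sigma, Finset.mem_range] at hm ⊢
    omega
  · rintro ⟨k, j⟩ hm
    simp only [Finset.mem_sigma, Finset.mem_range] at hm ⊢
    omega
  · rintro ⟨j, i⟩ hm; simp
  · rintro ⟨k, j⟩ hm
    simp only [Finset.mem_sigma, Finset.mem_range] at hm
    show (⟨j + (k - j), j⟩ : (_ : ℕ) × ℕ) = ⟨k, j⟩
    rw [show j + (k - j) = k by omega]
  · rintro ⟨j, i⟩ hm
    simp

lemma descF_add (n p q : ℕ) :
    n.descFactorial (p + q) = n.descFactorial p * (n - p).descFactorial q := by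
  induction q with
  | zero => simp
  | succ q ih =>
      rw [← Nat.add_assoc, Nat.descFactorial_succ, ih, Nat.descFactorial_succ, Nat.sub_sub]
      ring

lemma descF_vandermonde (B C k : ℕ) :
    ∑ j ∈ range (k + 1), k.choose j * B.descFactorial j * C.descFactorial (k - j)
      = (B + C).descFactorial k := by
  rw [Nat.descFactorial_eq_factorial_mul_choose, Nat.add_choose_eq,
    Finset.Nat.sum_antidiagonal_eq_sum_range_succ_mk, Finset.mul_sum]
  refine Finset.sum_congr rfl fun j hj => ?_
  have hjk : j ≤ k := Nat.lt_succ_iff.mp (Finset.mem_range.mp hj)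
  rw [Nat.descFactorial_eq_factorial_mul_choose, Nat.descFactorial_eq_factorial_mul_choose,
    ← Nat.choose_mul_factorial_mul_factorial hjk]
  ring

lemma coeff_id (a b c d k : ℕ) (h : b + c = a + d) (hk : k ≤ a) :
    ∑ j ∈ range (k + 1),
        a.choose j * b.descFactorial (a - j) * c.descFactorial j * (a - j).choose (k - j)
      = a.choose k * b.descFactorial (a - k) * (d + k).descFactorial k := by
  have step : ∀ j ∈ range (k + 1),
      a.choose j * b.descFactorial (a - j) * c.descFactorial j * (a - j).choose (k - j)
        = a.choose k * b.descFactorial (a - k) *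
            (k.choose j * c.descFactorial j * (b - (a - k)).descFactorial (k - j)) := by
    intro j hj
    have hjk : j ≤ k := Nat.lt_succ_iff.mp (Finset.mem_range.mp hj)
    have h1 : a.choose k * k.choose j = a.choose j * (a - j).choose (k - j) :=
      Nat.choose_mul hjk
    have h2 : b.descFactorial (a - j) =
        b.descFactorial (a - k) * (b - (a - k)).descFactorial (k - j) := by
      have : a - j = (a - k) + (k - j) := by omega
      rw [this, descF_add]
    calc a.choose j * b.descFactorial (a - j) * c.descFactorial j * (a - j).choose (k - j)
        = (a.choose j * (a - j).choose (k - j)) *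
            (b.descFactorial (a - k) * (b - (a - k)).descFactorial (k - j) * c.descFactorial j) := by
          rw [h2]; ring
      _ = (a.choose k * k.choose j) *
            (b.descFactorial (a - k) * (b - (a - k)).descFactorial (k - j) * c.descFactorial j) := by
          rw [h1]
      _ = _ := by ring
  rw [Finset.sum_congr rfl step, ← Finset.mul_sum]
  have : ∑ j ∈ range (k + 1),
      k.choose j * c.descFactorial j * (b - (a - k)).descFactorial (k - j)
        = (c + (b - (a - k))).descFactorial k := descF_vandermonde c (b - (a-k)) k
  rw [this]
  by_cases hab : a - k ≤ b
  · have : c + (b - (a - k)) = d + k := by omega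
    rw [this]
  · have hb : b.descFactorial (a - k) = 0 := Nat.descFactorial_eq_zero_iff_lt.mpr (by omega)
    rw [hb]; ring

lemma key (b : ℕ) (m : ℤ) :
    ∀ (a : ℕ) (x : ℂ), x ≠ 1 →
    iteratedDeriv a (fun y : ℂ => y ^ b * (1 - y) ^ m) x =
      ∑ j ∈ Finset.range (a + 1),
        ((a.choose j : ℂ) * (b.descFactorial (a - j) : ℂ)) * ((-1) ^ j * pch m j) *
          x ^ (b - (a - j)) * (1 - x) ^ (m - (j : ℤ)) := by
  intro a
  induction a with
  | zero => intro x hx; simp [iteratedDeriv_zero, pch_zero]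
  | succ a ih =>
    intro x hx
    have hx0 : (1 : ℂ) - x ≠ 0 := sub_ne_zero.mpr (Ne.symm hx)
    rw [iteratedDeriv_succ]
    set C : ℕ → ℂ := fun j =>
      ((a.choose j : ℂ) * (b.descFactorial (a - j) : ℂ)) * ((-1) ^ j * pch m j) with hC
    have hev : iteratedDeriv a (fun y : ℂ => y ^ b * (1 - y) ^ m)
        =ᶠ[nhds x] fun y => ∑ j ∈ Finset.range (a + 1),
          C j * y ^ (b - (a - j)) * (1 - y) ^ (m - (j : ℤ)) := by
      filter_upwards [isOpen_ne.mem_nhds hx] with y hy using ih y hy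
    rw [hev.deriv_eq]
    set D : ℕ → ℂ := fun j =>
      C j * ((b - (a - j) : ℕ) * x ^ (b - (a - j) - 1)) * (1 - x) ^ (m - (j : ℤ))
        + C j * x ^ (b - (a - j)) *
            (-(((m - (j : ℤ)) : ℂ) * (1 - x) ^ (m - (j : ℤ) - 1))) with hD
    have hterm : ∀ j ∈ Finset.range (a + 1),
        HasDerivAt (fun y : ℂ => C j * y ^ (b - (a - j)) * (1 - y) ^ (m - (j : ℤ))) (D j) x := by
      intro j _
      have h1 : HasDerivAt (fun y : ℂ => C j * y ^ (b - (a - j)))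
          (C j * ((b - (a - j) : ℕ) * x ^ (b - (a - j) - 1))) x :=
        (hasDerivAt_pow _ x).const_mul (C j)
      have hsub : HasDerivAt (fun y : ℂ => 1 - y) (-1) x := (hasDerivAt_id x).const_sub 1
      have h2 : HasDerivAt (fun y : ℂ => (1 - y) ^ (m - (j : ℤ)))
          (-(((m - (j : ℤ)) : ℂ) * (1 - x) ^ (m - (j : ℤ) - 1))) x := by
        have := (hasDerivAt_zpow (m - (j : ℤ)) (1 - x) (Or.inl hx0)).comp x hsub
        exact this.congr_deriv (by push_cast; ring)
      exact h1.mul h2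
    rw [(HasDerivAt.fun_sum hterm).deriv]
    -- algebra
    set T : ℕ → ℂ := fun j =>
      (b.descFactorial (a + 1 - j) : ℂ) * ((-1) ^ j * pch m j) *
        x ^ (b - (a + 1 - j)) * (1 - x) ^ (m - (j : ℤ)) with hT
    have claim1 : ∀ j ∈ Finset.range (a + 1),
        D j = (a.choose j : ℂ) * T j + (a.choose j : ℂ) * T (j + 1) := by
      intro j hj
      have hja : j ≤ a := Nat.lt_succ_iff.mp (Finset.mem_range.mp hj)
      have e1 : a + 1 - j = (a - j) + 1 := by omega
      have e2 : b - (a - j) - 1 = b - (a + 1 - j) := by omega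
      have e3 : a + 1 - (j + 1) = a - j := by omega
      have e4 : m - ((j : ℕ) + 1 : ℕ) = m - (j:ℤ) - 1 := by push_cast; ring
      simp only [hD, hT, e1, e2, e3, e4, Nat.descFactorial_succ, pch_succ, pow_succ]
      push_cast
      ring
    rw [Finset.sum_congr rfl claim1, Finset.sum_add_distrib]
    have target_eq : ∑ j ∈ Finset.range (a + 1 + 1),
        ((a + 1).choose j : ℂ) * (b.descFactorial (a + 1 - j) : ℂ) * ((-1) ^ j * pch m j) *
          x ^ (b - (a + 1 - j)) * (1 - x) ^ (m - (j : ℤ))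
        = ∑ j ∈ Finset.range (a + 1 + 1), ((a + 1).choose j : ℂ) * T j := by
      refine Finset.sum_congr rfl fun j _ => ?_
      simp only [hT]; ring
    rw [target_eq, Finset.sum_range_succ' _ (a + 1)]
    have hch : ∀ j, (((a + 1).choose (j + 1) : ℕ) : ℂ)
        = (a.choose j : ℂ) + (a.choose (j + 1) : ℂ) := by
      intro j; rw [Nat.choose_succ_succ']; push_cast; ring
    have split : ∑ j ∈ Finset.range (a + 1), ((a + 1).choose (j + 1) : ℂ) * T (j + 1)
        = ∑ j ∈ Finset.range (a + 1), (a.choose j : ℂ) * T (j + 1)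
          + ∑ j ∈ Finset.range (a + 1), (a.choose (j + 1) : ℂ) * T (j + 1) := by
      rw [← Finset.sum_add_distrib]
      refine Finset.sum_congr rfl fun j _ => ?_
      rw [hch j]; ring
    rw [split]
    have last : ∑ j ∈ Finset.range (a + 1), (a.choose (j + 1) : ℂ) * T (j + 1)
          + ((a + 1).choose 0 : ℂ) * T 0
        = ∑ j ∈ Finset.range (a + 1), (a.choose j : ℂ) * T j := by
      rw [Finset.sum_range_succ]
      rw [Finset.sum_range_succ' (fun j => (a.choose j : ℂ) * T j) a]
      simp [Nat.choose_succ_self]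
    rw [← last]; ring

theorem legendre_rational_derivative_identity
    (a b c d : ℕ) (h : b + c = a + d) (z w : ℂ) (hzw : (1 - w) * (1 - z) = 1) :
    (1 / (a ! : ℂ)) * iteratedDeriv a (fun x : ℂ => x ^ b * (1 - x) ^ c) z =
      (-1) ^ (a + b) * (1 - w) ^ (a + 1) *
        ((1 / (a ! : ℂ)) * iteratedDeriv a (fun x : ℂ => x ^ b / (1 - x) ^ (d + 1)) w) := by
  have hu : (1 : ℂ) - z ≠ 0 := by
    intro h0; rw [h0, mul_zero] at hzw; exact one_ne_zero hzw.symm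
  have hv : (1 : ℂ) - w ≠ 0 := by
    intro h0; rw [h0, zero_mul] at hzw; exact one_ne_zero hzw.symm
  have hz1 : z ≠ 1 := fun hh => hu (by rw [hh, sub_self])
  have hw1 : w ≠ 1 := fun hh => hv (by rw [hh, sub_self])
  have hvu : (1 : ℂ) - w = (1 - z)⁻¹ := eq_inv_of_mul_eq_one_left hzw
  have hwz2 : w = (-z) * (1 - w) := by linear_combination -hzw
  have e1 : (fun x : ℂ => x ^ b * (1 - x) ^ c) = fun x : ℂ => x ^ b * (1 - x) ^ ((c : ℕ) : ℤ) := by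
    funext x; rw [zpow_natCast]
  have e2 : (fun x : ℂ => x ^ b / (1 - x) ^ (d + 1))
      = fun x : ℂ => x ^ b * (1 - x) ^ (-((d + 1 : ℕ) : ℤ)) := by
    funext x; rw [zpow_neg, zpow_natCast, div_eq_mul_inv]
  rw [e1, e2, key b ((c : ℕ) : ℤ) a z hz1, key b (-((d + 1 : ℕ) : ℤ)) a w hw1]
  set M : ℂ := ∑ k ∈ Finset.range (a + 1),
    ((a.choose k * b.descFactorial (a - k) * (d + k).descFactorial k : ℕ) : ℂ) *
      ((-1) ^ k * z ^ (b - (a - k))) * (1 - w) ^ ((b : ℤ) - (d : ℤ)) with hM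
  have hR : ((-1 : ℂ)) ^ (a + b) * (1 - w) ^ (a + 1) *
      ∑ j ∈ Finset.range (a + 1),
        ((a.choose j : ℂ) * (b.descFactorial (a - j) : ℂ)) *
          ((-1) ^ j * pch (-((d + 1 : ℕ) : ℤ)) j) *
          w ^ (b - (a - j)) * (1 - w) ^ (-((d + 1 : ℕ) : ℤ) - (j : ℤ)) = M := by
    rw [Finset.mul_sum, hM]
    refine Finset.sum_congr rfl fun j hj => ?_
    have hja : j ≤ a := Nat.lt_succ_iff.mp (Finset.mem_range.mp hj)
    rw [pch_neg d j]
    by_cases hbj : a - j ≤ b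
    · have hsgn : ((-1 : ℂ)) ^ (a + b) * (-z) ^ (b - (a - j)) = (-1) ^ j * z ^ (b - (a - j)) := by
        rw [neg_pow z, ← mul_assoc, ← pow_add]
        rw [show a + b + (b - (a - j)) = 2 * b + j by omega, pow_add, pow_mul, neg_one_sq, one_pow, one_mul]
      have hwn : w ^ (b - (a - j)) = (-z) ^ (b - (a - j)) * (1 - w) ^ (b - (a - j)) := by
        rw [← mul_pow, ← hwz2]
      have hv2 : ((1 : ℂ) - w) ^ (a + 1) * (1 - w) ^ (b - (a - j)) *
          (1 - w) ^ (-((d + 1 : ℕ) : ℤ) - (j : ℤ)) = (1 - w) ^ ((b : ℤ) - (d : ℤ)) := by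
        rw [← zpow_natCast ((1 : ℂ) - w) (a + 1), ← zpow_natCast ((1 : ℂ) - w) (b - (a - j)),
          ← zpow_add₀ hv, ← zpow_add₀ hv]
        congr 1
        omega
      rw [hwn, ← hsgn]
      push_cast at hv2 ⊢
      linear_combination ((a.choose j : ℂ) * (b.descFactorial (a - j) : ℂ) *
        ((d + j).descFactorial j : ℂ) * (-1) ^ (a + b) * (-z) ^ (b - (a - j))) * hv2
    · have hb0 : b.descFactorial (a - j) = 0 := Nat.descFactorial_eq_zero_iff_lt.mpr (by omega)
      simp [hb0]
  have hL : ∑ j ∈ Finset.range (a + 1),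
      ((a.choose j : ℂ) * (b.descFactorial (a - j) : ℂ)) * ((-1) ^ j * pch ((c : ℕ) : ℤ) j) *
        z ^ (b - (a - j)) * (1 - z) ^ (((c : ℕ) : ℤ) - (j : ℤ)) = M := by
    rw [hM]
    set f : ℕ → ℕ → ℂ := fun j i =>
      ((a.choose j * b.descFactorial (a - j) * c.descFactorial j * (a - j).choose i : ℕ) : ℂ) *
        ((-1) ^ j * z ^ (b - (a - j)) * (-z) ^ i) * (1 - w) ^ ((b : ℤ) - (d : ℤ)) with hf
    have step : ∀ j ∈ Finset.range (a + 1),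
        ((a.choose j : ℂ) * (b.descFactorial (a - j) : ℂ)) * ((-1) ^ j * pch ((c : ℕ) : ℤ) j) *
          z ^ (b - (a - j)) * (1 - z) ^ (((c : ℕ) : ℤ) - (j : ℤ))
          = ∑ i ∈ Finset.range (a + 1 - j), f j i := by
      intro j hj
      have hja : j ≤ a := Nat.lt_succ_iff.mp (Finset.mem_range.mp hj)
      have h1 : ((1 : ℂ) - w) ^ ((b : ℤ) - (d : ℤ)) = (1 - z) ^ ((d : ℤ) - (b : ℤ)) := by
        rw [hvu, inv_zpow, ← zpow_neg]
        congr 1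
        ring
      have hsplitj : ((1 : ℂ) - z) ^ (((c : ℕ) : ℤ) - (j : ℤ))
          = (1 - w) ^ ((b : ℤ) - (d : ℤ)) * (1 - z) ^ (a - j) := by
        rw [h1, ← zpow_natCast ((1 : ℂ) - z) (a - j), ← zpow_add₀ hu]
        congr 1
        omega
      have hbin : ((1 : ℂ) - z) ^ (a - j)
          = ∑ i ∈ Finset.range (a - j + 1), (-z) ^ i * ((a - j).choose i : ℂ) := by
        rw [show (1 : ℂ) - z = -z + 1 by ring, add_pow]
        refine Finset.sum_congr rfl fun i _ => ?_
        rw [one_pow, mul_one]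
      rw [pch_natCast, hsplitj, hbin, Finset.mul_sum, Finset.mul_sum,
        show a - j + 1 = a + 1 - j by omega]
      refine Finset.sum_congr rfl fun i _ => ?_
      simp only [hf]
      push_cast
      ring
    rw [Finset.sum_congr rfl step, sum_triangle a f]
    refine Finset.sum_congr rfl fun k hk => ?_
    have hka : k ≤ a := Nat.lt_succ_iff.mp (Finset.mem_range.mp hk)
    have per : ∀ j ∈ Finset.range (k + 1), f j (k - j)
        = ((a.choose j * b.descFactorial (a - j) * c.descFactorial j
              * (a - j).choose (k - j) : ℕ) : ℂ) *
          (((-1) ^ k * z ^ (b - (a - k))) * (1 - w) ^ ((b : ℤ) - (d : ℤ))) := by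
      intro j hj
      have hjk : j ≤ k := Nat.lt_succ_iff.mp (Finset.mem_range.mp hj)
      by_cases hbj : a - j ≤ b
      · have hz2 : z ^ (b - (a - j)) * z ^ (k - j) = z ^ (b - (a - k)) := by
          rw [← pow_add]
          congr 1
          omega
        have hs2 : ((-1 : ℂ)) ^ j * (-1) ^ (k - j) = (-1) ^ k := by
          rw [← pow_add]
          congr 1
          omega
        simp only [hf]
        rw [neg_pow z]
        push_cast
        linear_combination ((a.choose j : ℂ) * (b.descFactorial (a - j) : ℂ) *
            (c.descFactorial j : ℂ) * ((a - j).choose (k - j) : ℂ) * (1 - w) ^ ((b : ℤ) - (d : ℤ))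
              * (-1) ^ j * (-1) ^ (k - j)) * hz2
          + ((a.choose j : ℂ) * (b.descFactorial (a - j) : ℂ) *
            (c.descFactorial j : ℂ) * ((a - j).choose (k - j) : ℂ) * (1 - w) ^ ((b : ℤ) - (d : ℤ))
              * z ^ (b - (a - k))) * hs2
      · have hb0 : b.descFactorial (a - j) = 0 := Nat.descFactorial_eq_zero_iff_lt.mpr (by omega)
        simp [hf, hb0]
    rw [Finset.sum_congr rfl per, ← Finset.sum_mul, ← Nat.cast_sum,
      coeff_id a b c d k h hka]
    push_cast
    ring
  rw [hL, ← hR]; ring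
end

section
/- For any nonnegative integers j and k: C(k+j, j) · Σ_{i=1}^{j} 1/(k+i) = Σ_{i=1}^{j} C(k+j-i, j-i) · (1/i). -/
private def Ll (j k : ℕ) : ℚ :=
  ((k + j).choose j : ℚ) * ∑ i ∈ Finset.Icc 1 j, 1 / ((k : ℚ) + (i : ℚ))

private def Rr (j k : ℕ) : ℚ :=
  ∑ i ∈ Finset.Icc 1 j, ((k + j - i).choose k : ℚ) * (1 / (i : ℚ))

private lemma icc_to_range (n : ℕ) (f : ℕ → ℚ) :
    ∑ i ∈ Finset.Icc 1 n, f i = ∑ i ∈ Finset.range n, f (1 + i) := by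
  rw [← Finset.Ico_add_one_right_eq_Icc, Finset.sum_Ico_eq_sum_range]
  simp

private lemma key_nat (j k : ℕ) :
    (k + 1) * (k + j + 2).choose (j + 1) = (k + j + 2) * (k + j + 1).choose (j + 1) := by
  have h1 := Nat.add_one_mul_choose_eq (k + j + 1) k
  have h2 : (k + j + 1).choose k = (k + j + 1).choose (j + 1) := by
    have : k + j + 1 = k + (j + 1) := by omega
    rw [this, Nat.choose_symm_add]
  have h3 : (k + j + 2).choose (k + 1) = (k + j + 2).choose (j + 1) := by
    have : k + j + 2 = (k + 1) + (j + 1) := by omega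
    rw [this, Nat.choose_symm_add]
  rw [← h3, ← h2, mul_comm]
  exact h1.symm

private lemma LL (j k : ℕ) : Ll (j + 1) (k + 1) = Ll j (k + 1) + Ll (j + 1) k := by
  unfold Ll
  rw [icc_to_range, icc_to_range, icc_to_range]
  push_cast
  set T : ℚ := ∑ x ∈ Finset.range j, 1 / ((k : ℚ) + 2 + (x : ℚ)) with hT
  have e1 : ∑ x ∈ Finset.range (j + 1), 1 / ((k : ℚ) + 1 + (1 + (x : ℚ)))
      = T + 1 / ((k : ℚ) + 2 + (j : ℚ)) := by
    rw [Finset.sum_range_succ, hT]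
    congr 1
    · exact Finset.sum_congr rfl fun i _ => by ring_nf
    · ring_nf
  have e2 : ∑ x ∈ Finset.range j, 1 / ((k : ℚ) + 1 + (1 + (x : ℚ))) = T := by
    exact Finset.sum_congr rfl fun i _ => by ring_nf
  have e3 : ∑ x ∈ Finset.range (j + 1), 1 / ((k : ℚ) + (1 + (x : ℚ)))
      = T + 1 / ((k : ℚ) + 1) := by
    rw [Finset.sum_range_succ', hT]
    congr 1
    · exact Finset.sum_congr rfl fun i _ => by push_cast; ring_nf
    · norm_num
  rw [e1, e2, e3]
  have hp : ((k + 1 + (j + 1)).choose (j + 1) : ℚ)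
      = ((k + 1 + j).choose j : ℚ) + ((k + j + 1).choose (j + 1) : ℚ) := by
    have h : k + 1 + (j + 1) = (k + j + 1) + 1 := by omega
    rw [h, Nat.choose_succ_succ]
    push_cast
    rw [show k + j + 1 = k + 1 + j from by omega]
  have hc2 : ((k + (j + 1)).choose (j + 1) : ℚ) = ((k + j + 1).choose (j + 1) : ℚ) := by
    rw [show k + (j + 1) = k + j + 1 from by omega]
  rw [hp, hc2]
  have hk : ((k : ℚ) + 1) * ((k + j + 2).choose (j + 1) : ℚ)
      = ((k : ℚ) + (j : ℚ) + 2) * ((k + j + 1).choose (j + 1) : ℚ) := by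
    have := congrArg (Nat.cast : ℕ → ℚ) (key_nat j k)
    push_cast at this
    linarith [this]
  have key : (((k + 1 + j).choose j : ℚ) + ((k + j + 1).choose (j + 1) : ℚ))
        * (1 / ((k : ℚ) + 2 + (j : ℚ)))
      = ((k + j + 1).choose (j + 1) : ℚ) * (1 / ((k : ℚ) + 1)) := by
    have hp2 : ((k + 1 + j).choose j : ℚ) + ((k + j + 1).choose (j + 1) : ℚ)
        = ((k + j + 2).choose (j + 1) : ℚ) := by
      rw [show k + j + 2 = k + 1 + (j + 1) from by omega, hp]
    rw [hp2]
    have hne1 : ((k : ℚ) + 2 + (j : ℚ)) ≠ 0 := by positivity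
    have hne2 : ((k : ℚ) + 1) ≠ 0 := by positivity
    field_simp
    linear_combination hk
  linear_combination key

private lemma RR (j k : ℕ) : Rr (j + 1) (k + 1) = Rr j (k + 1) + Rr (j + 1) k := by
  unfold Rr
  have step : ∀ i ∈ Finset.Icc 1 (j + 1),
      ((k + 1 + (j + 1) - i).choose (k + 1) : ℚ) * (1 / (i : ℚ))
      = ((k + (j + 1) - i).choose (k + 1) : ℚ) * (1 / (i : ℚ))
        + ((k + (j + 1) - i).choose k : ℚ) * (1 / (i : ℚ)) := by
    intro i hi
    simp only [Finset.mem_Icc] at hi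
    have h : k + 1 + (j + 1) - i = (k + (j + 1) - i) + 1 := by omega
    rw [h, Nat.choose_succ_succ']
    push_cast
    ring
  rw [Finset.sum_congr rfl step, Finset.sum_add_distrib]
  congr 1
  · rw [Finset.sum_Icc_succ_top (by omega : 1 ≤ j + 1)]
    have hz : ((k + (j + 1) - (j + 1)).choose (k + 1) : ℚ) = 0 := by
      norm_num [show k + (j + 1) - (j + 1) = k from by omega, Nat.choose_succ_self]
    rw [hz]
    rw [zero_mul, add_zero]
    apply Finset.sum_congr rfl
    intro i hi
    simp only [Finset.mem_Icc] at hi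
    have h : k + (j + 1) - i = k + 1 + j - i := by omega
    rw [h]

private lemma main_lemma (j : ℕ) : ∀ k, Ll j k = Rr j k := by
  induction j with
  | zero => intro k; simp [Ll, Rr]
  | succ j ih =>
    intro k
    induction k with
    | zero =>
      unfold Ll Rr
      rw [Nat.zero_add, Nat.choose_self, Nat.cast_one, one_mul]
      apply Finset.sum_congr rfl
      intro i hi
      simp only [Finset.mem_Icc] at hi
      rw [Nat.choose_zero_right, Nat.cast_one, one_mul]
      norm_num
    | succ k ihk =>
      rw [LL, ih (k + 1), ihk, RR]

theorem hyperharmonic_binomial_identity (j k : ℕ) :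
    ((k + j).choose j : ℚ) * ∑ i ∈ Finset.Icc 1 j, 1 / ((k : ℚ) + (i : ℚ)) =
      ∑ i ∈ Finset.Icc 1 j, ((k + j - i).choose (j - i) : ℚ) * (1 / (i : ℚ)) := by
  have := main_lemma j k
  unfold Ll Rr at this
  rw [this]
  apply Finset.sum_congr rfl
  intro i hi
  simp only [Finset.mem_Icc] at hi
  congr 2
  have h : k + j - i = (j - i) + k := by omega
  rw [h, Nat.choose_symm_add]
end

section
/- Define hyperharmonic numbers by H_j^{(0)} = 1/j for j ≥ 1, and H_j^{(k+1)} = Σ_{i=1}^{j} H_i^{(k)}. Then for all k ≥ 0 and j ≥ 1: H_j^{(k+1)} = C(k+j, j) · (H_{k+j}^{(1)} - H_k^{(1)}), where H_m^{(1)} = Σ_{i=1}^{m} 1/i is the m-th harmonic number. -/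
/-- Hyperharmonic numbers: `hyperharmonic 0 j = 1/j` (for `j ≥ 1`) and
`hyperharmonic (k+1) j = ∑_{i=1}^j hyperharmonic k i`. -/
def hyperharmonic : ℕ → ℕ → ℚ
  | 0, j => 1 / (j : ℚ)
  | k + 1, j => ∑ i ∈ Finset.Icc 1 j, hyperharmonic k i

private lemma harm_succ (n : ℕ) :
    (∑ i ∈ Finset.Icc 1 (n + 1), 1 / (i : ℚ)) =
      (∑ i ∈ Finset.Icc 1 n, 1 / (i : ℚ)) + 1 / ((n : ℚ) + 1) := by
  rw [Finset.sum_Icc_succ_top (by omega : 1 ≤ n + 1)]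
  push_cast
  ring

private lemma choose_key (k j : ℕ) :
    ((k + j + 1).choose (j + 1) : ℚ) * ((k : ℚ) + j + 2) =
      ((k + j + 2).choose (j + 1) : ℚ) * ((k : ℚ) + 1) := by
  have h : (k + j + 2) * (k + j + 1).choose (j + 1) = (k + j + 2).choose (j + 1) * (k + 1) := by
    have h1 : (k + j + 1).choose (j + 1) = (k + j + 1).choose k := by
      rw [← Nat.choose_symm (by omega)]
      congr 1; omega
    have h2 : (k + j + 2).choose (j + 1) = (k + j + 2).choose (k + 1) := by
      rw [← Nat.choose_symm (by omega)]
      congr 1; omega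
    rw [h1, h2]
    have := Nat.add_one_mul_choose_eq (k + j + 1) k
    simpa [Nat.succ_eq_add_one, show k + j + 1 + 1 = k + j + 2 by omega] using this
  have := congrArg (fun n : ℕ => (n : ℚ)) h
  push_cast at this
  linarith

theorem hyperharmonic_eq_choose_mul_harmonic_sub (k j : ℕ) (hj : 1 ≤ j) :
    hyperharmonic (k + 1) j =
      ((k + j).choose j : ℚ) *
        ((∑ i ∈ Finset.Icc 1 (k + j), 1 / (i : ℚ)) - ∑ i ∈ Finset.Icc 1 k, 1 / (i : ℚ)) := by
  induction k generalizing j with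
  | zero =>
    simp only [hyperharmonic, Nat.zero_add, Nat.choose_self]
    simp
  | succ k ih =>
    induction j with
    | zero => omega
    | succ j ihj =>
      rcases Nat.eq_zero_or_pos j with hj0 | hjpos
      · subst hj0
        -- base case j = 1
        show (∑ i ∈ Finset.Icc 1 1, hyperharmonic (k + 1) i) = _
        rw [Finset.Icc_self, Finset.sum_singleton, ih 1 le_rfl]
        have h1 : k + 1 + 1 = (k + 1) + 1 := rfl
        rw [show k + 1 = k + 1 from rfl, harm_succ k, harm_succ (k + 1)]
        have e1 : (∑ i ∈ Finset.Icc 1 (k + 1), 1 / (i : ℚ)) =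
            (∑ i ∈ Finset.Icc 1 k, 1 / (i : ℚ)) + 1 / ((k : ℚ) + 1) := harm_succ k
        rw [e1]
        simp only [Nat.choose_one_right]
        push_cast
        have hk1 : (k : ℚ) + 1 ≠ 0 := by positivity
        have hk2 : (k : ℚ) + 1 + 1 ≠ 0 := by positivity
        field_simp
        ring_nf
        simp only [Nat.choose_one_right]
        push_cast
        ring
      · -- inductive step in j
        have hrec : hyperharmonic (k + 2) (j + 1) =
            hyperharmonic (k + 2) j + hyperharmonic (k + 1) (j + 1) := by
          show (∑ i ∈ Finset.Icc 1 (j + 1), hyperharmonic (k + 1) i) = _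
          rw [Finset.sum_Icc_succ_top (by omega : 1 ≤ j + 1)]
          rfl
        rw [hrec, ihj hjpos, ih (j + 1) (by omega)]
        have hA : k + 1 + j = k + j + 1 := by omega
        have hB : k + (j + 1) = k + j + 1 := by omega
        have hC : k + 1 + (j + 1) = k + j + 2 := by omega
        rw [hA, hB, hC]
        have hHk1 : (∑ i ∈ Finset.Icc 1 (k + 1), 1 / (i : ℚ)) =
            (∑ i ∈ Finset.Icc 1 k, 1 / (i : ℚ)) + 1 / ((k : ℚ) + 1) := harm_succ k
        have hHkj2 : (∑ i ∈ Finset.Icc 1 (k + j + 2), 1 / (i : ℚ)) =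
            (∑ i ∈ Finset.Icc 1 (k + j + 1), 1 / (i : ℚ)) + 1 / ((k : ℚ) + j + 2) := by
          have := harm_succ (k + j + 1)
          rw [show k + j + 1 + 1 = k + j + 2 by omega] at this
          rw [this]; push_cast; ring
        have pascal : ((k + j + 2).choose (j + 1) : ℚ) =
            ((k + j + 1).choose j : ℚ) + ((k + j + 1).choose (j + 1) : ℚ) := by
          have := Nat.choose_succ_succ (k + j + 1) j
          exact_mod_cast congrArg (fun n : ℕ => (n : ℚ)) this
        have key := choose_key k j
        rw [hHk1, hHkj2, pascal]
        set a : ℚ := ((k + j + 1).choose j : ℚ)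
        set b : ℚ := ((k + j + 1).choose (j + 1) : ℚ)
        have hk1 : (k : ℚ) + 1 ≠ 0 := by positivity
        have hk2 : (k : ℚ) + j + 2 ≠ 0 := by positivity
        rw [pascal] at key
        have key2 : b * (1 / ((k : ℚ) + 1)) = (a + b) * (1 / ((k : ℚ) + j + 2)) := by
          rw [mul_one_div, mul_one_div, div_eq_div_iff hk1 hk2]
          linarith [key]
        linear_combination key2
end

section
/- With L_n defined as the multiple Legendre polynomials, L_2(p_1,q_1;p_2,q_2;z) = (-1)^{q_1} z^{q_2}(1-z)^{p_2} · (1/(p_2+q_2)!) d^{p_2+q_2}/dz^{p_2+q_2} [ z^{p_2+q_1}(1-z)^{p_1+q_2} ]. -/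
open scoped Nat

/-- Auxiliary recursion for multiple Legendre polynomials, peeling the
outermost (i.e. last) index pair from the head of the list. -/
noncomputable def LegAux : List (ℕ × ℕ) → ℂ → ℂ
  | [], _ => 1
  | (p, q) :: rest, z =>
      z ^ q * (1 - z) ^ p *
        ((1 / ((p + q)! : ℂ)) *
          iteratedDeriv (p + q) (fun x : ℂ => x ^ p * (1 - x) ^ q * LegAux rest x) z)

/-- The multiple Legendre polynomial `L_n(p_1,q_1;…;p_n,q_n;z)`, where the list
is `[(p_1,q_1),…,(p_n,q_n)]`: recursively, `L_0 = 1` and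
`L_n = z^{q_n}(1-z)^{p_n} D_{p_n+q_n}(z^{p_n}(1-z)^{q_n} L_{n-1})`. -/
noncomputable def Leg (L : List (ℕ × ℕ)) (z : ℂ) : ℂ := LegAux L.reverse z


open Polynomial






lemma iteratedDeriv_polyEval (n : ℕ) (P : ℂ[X]) :
    iteratedDeriv n (fun x => P.eval x) = fun x => (derivative^[n] P).eval x := by
  induction n generalizing P with
  | zero => simp
  | succ n ih =>
      rw [iteratedDeriv_succ', Function.iterate_succ_apply]
      have hfun : (deriv fun x => P.eval x) = fun x => (derivative P).eval x :=
        funext fun x => Polynomial.deriv P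
      rw [hfun, ih]

lemma iterate_derivative_of_natDegree_le (P : ℂ[X]) (n : ℕ) (h : P.natDegree ≤ n) :
    derivative^[n] P = C ((n ! : ℂ) * P.coeff n) := by
  have hdeg : (derivative^[n] P).natDegree ≤ 0 := by
    have := Polynomial.natDegree_iterate_derivative P n
    omega
  rw [Polynomial.eq_C_of_natDegree_le_zero hdeg]
  congr 1
  have := Polynomial.coeff_iterate_derivative P 0 (k := n)
  simp only [zero_add] at this
  rw [this, Nat.descFactorial_self, nsmul_eq_mul]

lemma coeff_top (p q : ℕ) : ((X : ℂ[X]) ^ p * (1 - X) ^ q).coeff (p + q) = (-1) ^ q := by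
  rw [add_comm p q, Polynomial.coeff_X_pow_mul]
  have h2 : ((1 : ℂ[X]) - X) ^ q = C ((-1) ^ q) * (X - C 1) ^ q := by
    rw [← neg_sub X (1 : ℂ[X]), neg_pow]
    simp [map_pow]
  have hm : (((X : ℂ[X]) - C 1) ^ q).Monic := (Polynomial.monic_X_sub_C (1:ℂ)).pow q
  have hd : (((X : ℂ[X]) - C 1) ^ q).natDegree = q := by
    rw [Polynomial.natDegree_pow, Polynomial.natDegree_X_sub_C, mul_one]
  have hc : (((X : ℂ[X]) - C 1) ^ q).coeff q = 1 := by
    have := hm.leadingCoeff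
    rwa [Polynomial.leadingCoeff, hd] at this
  rw [h2, Polynomial.coeff_C_mul, hc, mul_one]

lemma natDegree_base_le (p q : ℕ) : ((X : ℂ[X]) ^ p * (1 - X) ^ q).natDegree ≤ p + q := by
  refine (Polynomial.natDegree_mul_le).trans (add_le_add ?_ ?_)
  · simp
  · refine (Polynomial.natDegree_pow_le).trans ?_
    have : ((1 : ℂ[X]) - X).natDegree ≤ 1 := by
      refine (Polynomial.natDegree_sub_le _ _).trans ?_
      simp
    calc q * ((1:ℂ[X]) - X).natDegree ≤ q * 1 := Nat.mul_le_mul_left q this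
      _ = q := mul_one q

lemma iterate_derivative_base (p q : ℕ) :
    derivative^[p + q] ((X : ℂ[X]) ^ p * (1 - X) ^ q) = C (((p + q)! : ℂ) * (-1) ^ q) := by
  rw [iterate_derivative_of_natDegree_le _ _ (natDegree_base_le p q), coeff_top]

lemma legAux_one (p q : ℕ) (x : ℂ) :
    LegAux [(p, q)] x = (-1) ^ q * (x ^ q * (1 - x) ^ p) := by
  show x ^ q * (1 - x) ^ p * ((1 / ((p + q)! : ℂ)) *
      iteratedDeriv (p + q) (fun y : ℂ => y ^ p * (1 - y) ^ q * LegAux [] y) x) = _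
  have h1 : (fun y : ℂ => y ^ p * (1 - y) ^ q * LegAux [] y)
      = fun y => ((X : ℂ[X]) ^ p * (1 - X) ^ q).eval y := by
    funext y
    show y ^ p * (1 - y) ^ q * 1 = _
    simp
  rw [h1, iteratedDeriv_polyEval, iterate_derivative_base]
  simp only [Polynomial.eval_C]
  have hf : (((p + q)! : ℂ)) ≠ 0 := Nat.cast_ne_zero.mpr (Nat.factorial_ne_zero _)
  field_simp

theorem Leg_two (p₁ q₁ p₂ q₂ : ℕ) (z : ℂ) :
    Leg [(p₁, q₁), (p₂, q₂)] z =
      (-1) ^ q₁ * z ^ q₂ * (1 - z) ^ p₂ *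
        ((1 / ((p₂ + q₂)! : ℂ)) *
          iteratedDeriv (p₂ + q₂) (fun x : ℂ => x ^ (p₂ + q₁) * (1 - x) ^ (p₁ + q₂)) z) := by
  show z ^ q₂ * (1 - z) ^ p₂ * ((1 / ((p₂ + q₂)! : ℂ)) *
      iteratedDeriv (p₂ + q₂)
        (fun x : ℂ => x ^ p₂ * (1 - x) ^ q₂ * LegAux [(p₁, q₁)] x) z) = _
  have h2 : (fun x : ℂ => x ^ p₂ * (1 - x) ^ q₂ * LegAux [(p₁, q₁)] x)
      = fun x => (Polynomial.C ((-1 : ℂ) ^ q₁) *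
          ((X : ℂ[X]) ^ (p₂ + q₁) * (1 - X) ^ (p₁ + q₂))).eval x := by
    funext x
    rw [legAux_one]
    simp [pow_add]
    ring
  have h3 : (fun x : ℂ => x ^ (p₂ + q₁) * (1 - x) ^ (p₁ + q₂))
      = fun x => ((X : ℂ[X]) ^ (p₂ + q₁) * (1 - X) ^ (p₁ + q₂)).eval x := by
    funext x; simp
  rw [h2, h3, iteratedDeriv_polyEval, iteratedDeriv_polyEval,
    Polynomial.iterate_derivative_C_mul]
  simp only [Polynomial.eval_mul, Polynomial.eval_C]
  ring
end

section
/- Let P(z) ∈ ℂ[z], let w = z/(z-1), and let R(w) be the rational function with (1-z)P(z) = R(w). Then for all integers p, q ≥ 0: z^q (1-z)^{p+1} · (1/(p+q)!) d^{p+q}/dz^{p+q} [ z^p (1-z)^q P(z) ] = w^q · (1/(p+q)!) d^{p+q}/dw^{p+q} [ w^p R(w) ], where the right side is evaluated at w = z/(z-1). -/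
open scoped Nat

noncomputable section

def Sne : Set ℂ := {x : ℂ | x ≠ 1}

lemma Sne_open : IsOpen Sne := isOpen_ne

lemma mem_Sne {x : ℂ} (hx : x ≠ 1) : x ∈ Sne := hx

lemma iterWithin_eq (n : ℕ) {f : ℂ → ℂ} {x : ℂ} (hx : x ≠ 1) :
    iteratedDerivWithin n f Sne x = iteratedDeriv n f x := by
  rw [iteratedDerivWithin_eq_iteratedFDerivWithin, iteratedDeriv_eq_iteratedFDeriv,
    iteratedFDerivWithin_of_isOpen n Sne_open hx]

lemma diffAt_iter {f : ℂ → ℂ} (hf : ContDiffOn ℂ (⊤ : ℕ∞) f Sne) {x : ℂ} (hx : x ≠ 1)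
    (n : ℕ) : DifferentiableAt ℂ (iteratedDeriv n f) x := by
  have h1 : DifferentiableWithinAt ℂ (iteratedDerivWithin n f Sne) Sne x :=
    hf.differentiableOn_iteratedDerivWithin (m := n) (by exact_mod_cast lt_top_iff_ne_top.2 (by simp)) Sne_open.uniqueDiffOn x hx
  have h2 : DifferentiableAt ℂ (iteratedDerivWithin n f Sne) x :=
    h1.differentiableAt (Sne_open.mem_nhds hx)
  refine h2.congr_of_eventuallyEq ?_
  filter_upwards [Sne_open.mem_nhds hx] with y hy
  exact (iterWithin_eq n hy).symm

lemma iter_add_pt {f g : ℂ → ℂ} (hf : ContDiffOn ℂ (⊤ : ℕ∞) f Sne)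
    (hg : ContDiffOn ℂ (⊤ : ℕ∞) g Sne) {x : ℂ} (hx : x ≠ 1) (n : ℕ) :
    iteratedDeriv n (fun y => f y + g y) x = iteratedDeriv n f x + iteratedDeriv n g x := by
  rw [← iterWithin_eq (f := fun y => f y + g y) n hx, ← iterWithin_eq (f := f) n hx,
    ← iterWithin_eq (f := g) n hx]
  exact iteratedDerivWithin_add (mem_Sne hx) Sne_open.uniqueDiffOn
    ((hf.contDiffWithinAt (mem_Sne hx)).of_le (by exact_mod_cast le_top))
    ((hg.contDiffWithinAt (mem_Sne hx)).of_le (by exact_mod_cast le_top))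

lemma diffAt_of_sm {u : ℂ → ℂ} (hu : ContDiffOn ℂ (⊤ : ℕ∞) u Sne) {x : ℂ} (hx : x ≠ 1) :
    DifferentiableAt ℂ u x :=
  (hu.contDiffAt (Sne_open.mem_nhds hx)).differentiableAt (by simp)

lemma deriv_smooth {u : ℂ → ℂ} (hu : ContDiffOn ℂ (⊤ : ℕ∞) u Sne) :
    ContDiffOn ℂ (⊤ : ℕ∞) (deriv u) Sne :=
  hu.deriv_of_isOpen Sne_open (by exact_mod_cast le_top)

lemma linear_factor (n : ℕ) : ∀ (u : ℂ → ℂ), ContDiffOn ℂ (⊤ : ℕ∞) u Sne → ∀ z : ℂ, z ≠ 1 →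
    iteratedDeriv (n + 1) (fun x => (x - 1) * u x) z =
      (z - 1) * iteratedDeriv (n + 1) u z + (n + 1 : ℂ) * iteratedDeriv n u z := by
  induction n with
  | zero =>
    intro u hu z hz
    have h : HasDerivAt (fun x => (x - 1) * u x) (1 * u z + (z - 1) * deriv u z) z :=
      (((hasDerivAt_id z).sub_const 1).mul (diffAt_of_sm hu hz).hasDerivAt)
    rw [iteratedDeriv_one, iteratedDeriv_one, h.deriv]
    simp [iteratedDeriv_zero]
    ring
  | succ n ih =>
    intro u hu z hz
    have hu' : ContDiffOn ℂ (⊤ : ℕ∞) (deriv u) Sne := deriv_smooth hu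
    have hmul : ContDiffOn ℂ (⊤ : ℕ∞) (fun x => (x - 1) * deriv u x) Sne :=
      ((contDiffOn_id.sub contDiffOn_const).mul hu')
    have e1 : iteratedDeriv (n + 1 + 1) (fun x => (x - 1) * u x) z
        = iteratedDeriv (n + 1) (fun x => u x + (x - 1) * deriv u x) z := by
      rw [iteratedDeriv_succ']
      refine Filter.EventuallyEq.iteratedDeriv_eq (n + 1) ?_
      filter_upwards [Sne_open.mem_nhds hz] with y hy
      have h : HasDerivAt (fun x => (x - 1) * u x) (1 * u y + (y - 1) * deriv u y) y :=
        (((hasDerivAt_id y).sub_const 1).mul (diffAt_of_sm hu hy).hasDerivAt)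
      rw [h.deriv]; ring
    rw [e1, iter_add_pt hu hmul hz, ih (deriv u) hu' z hz, ← iteratedDeriv_succ',
      ← iteratedDeriv_succ']
    push_cast
    ring

lemma w_mem {x : ℂ} (hx : x ≠ 1) : x / (x - 1) ≠ 1 := by
  intro h
  have hx1 : x - 1 ≠ 0 := sub_ne_zero.mpr hx
  rw [div_eq_one_iff_eq hx1] at h
  exact one_ne_zero (show (1:ℂ) = 0 by linear_combination h)

lemma w_smooth : ContDiffOn ℂ (⊤ : ℕ∞) (fun x : ℂ => x / (x - 1)) Sne :=
  contDiffOn_id.div (contDiffOn_id.sub contDiffOn_const) fun x hx => sub_ne_zero.mpr hx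

lemma w_hasDeriv {z : ℂ} (hz : z ≠ 1) :
    HasDerivAt (fun x : ℂ => x / (x - 1)) (-1 / (z - 1) ^ 2) z := by
  have hz1 : z - 1 ≠ 0 := sub_ne_zero.mpr hz
  have h : HasDerivAt (fun x : ℂ => 1 + (x - 1)⁻¹) (-1 / (z - 1) ^ 2) z :=
    (((hasDerivAt_id z).sub_const 1).inv hz1).const_add 1
  refine h.congr_of_eventuallyEq ?_
  filter_upwards [Sne_open.mem_nhds hz] with y hy
  have hy1 : y - 1 ≠ 0 := sub_ne_zero.mpr hy
  field_simp
  ring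

lemma base_smooth {g : ℂ → ℂ} (hg : ContDiffOn ℂ (⊤ : ℕ∞) g Sne) :
    ContDiffOn ℂ (⊤ : ℕ∞) (fun x => (x - 1)⁻¹ * g (x / (x - 1))) Sne := by
  refine ContDiffOn.mul ?_ ?_
  · exact (contDiffOn_id.sub contDiffOn_const).inv fun x hx => sub_ne_zero.mpr hx
  · exact hg.comp w_smooth fun x hx => w_mem hx

lemma Gn_smooth {g : ℂ → ℂ} (hg : ContDiffOn ℂ (⊤ : ℕ∞) g Sne) (n : ℕ) :
    ContDiffOn ℂ (⊤ : ℕ∞) (fun x => (x - 1) ^ n * ((x - 1)⁻¹ * g (x / (x - 1)))) Sne :=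
  ((contDiffOn_id.sub contDiffOn_const).pow n).mul (base_smooth hg)

lemma star {g : ℂ → ℂ} (hg : ContDiffOn ℂ (⊤ : ℕ∞) g Sne) (n : ℕ) :
    ∀ z : ℂ, z ≠ 1 → iteratedDeriv n g (z / (z - 1)) =
      (-1 : ℂ) ^ n * (z - 1) ^ (n + 1) *
        iteratedDeriv n (fun x => (x - 1) ^ n * ((x - 1)⁻¹ * g (x / (x - 1)))) z := by
  induction n with
  | zero =>
    intro z hz
    have hz1 : z - 1 ≠ 0 := sub_ne_zero.mpr hz
    simp [iteratedDeriv_zero]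
    field_simp
  | succ n ih =>
    intro z hz
    have hz1 : z - 1 ≠ 0 := sub_ne_zero.mpr hz
    have hwz : z / (z - 1) ≠ 1 := w_mem hz
    set Gn : ℂ → ℂ := fun x => (x - 1) ^ n * ((x - 1)⁻¹ * g (x / (x - 1))) with hGn
    have hGnsm : ContDiffOn ℂ (⊤ : ℕ∞) Gn Sne := Gn_smooth hg n
    -- derivative of the LHS composed with w
    have hdg : DifferentiableAt ℂ (iteratedDeriv n g) (z / (z - 1)) :=
      diffAt_iter hg hwz n
    have hL : HasDerivAt (fun x => iteratedDeriv n g (x / (x - 1)))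
        (iteratedDeriv (n + 1) g (z / (z - 1)) * (-1 / (z - 1) ^ 2)) z := by
      have := (hdg.hasDerivAt.comp z (w_hasDeriv hz))
      rwa [← iteratedDeriv_succ] at this
    -- derivative of the RHS
    have hdG : DifferentiableAt ℂ (iteratedDeriv n Gn) z := diffAt_iter hGnsm hz n
    have hRd : HasDerivAt (fun x => (-1 : ℂ) ^ n * (x - 1) ^ (n + 1) * iteratedDeriv n Gn x)
        (((-1 : ℂ) ^ n * ((n + 1 : ℂ) * (z - 1) ^ n)) * iteratedDeriv n Gn z
          + ((-1 : ℂ) ^ n * (z - 1) ^ (n + 1)) * iteratedDeriv (n + 1) Gn z) z := by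
      have hA : HasDerivAt (fun x : ℂ => (-1 : ℂ) ^ n * (x - 1) ^ (n + 1))
          ((-1 : ℂ) ^ n * ((n + 1 : ℂ) * (z - 1) ^ n)) z := by
        have := (((hasDerivAt_id z).sub_const 1).pow (n + 1)).const_mul ((-1 : ℂ) ^ n)
        simpa using this
      have := hA.mul hdG.hasDerivAt
      rw [← iteratedDeriv_succ] at this
      convert this using 1
      try ring
      all_goals rfl
    -- the two functions agree near z
    have hEq : (fun x => iteratedDeriv n g (x / (x - 1)))
        =ᶠ[nhds z] (fun x => (-1 : ℂ) ^ n * (x - 1) ^ (n + 1) * iteratedDeriv n Gn x) := by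
      filter_upwards [Sne_open.mem_nhds hz] with y hy
      exact ih y hy
    have hE : iteratedDeriv (n + 1) g (z / (z - 1)) * (-1 / (z - 1) ^ 2)
        = ((-1 : ℂ) ^ n * ((n + 1 : ℂ) * (z - 1) ^ n)) * iteratedDeriv n Gn z
          + ((-1 : ℂ) ^ n * (z - 1) ^ (n + 1)) * iteratedDeriv (n + 1) Gn z := by
      have := hL.deriv
      rw [hEq.deriv_eq] at this
      rw [← this, hRd.deriv]
    -- rewrite the target function as (x-1) * Gn x
    have hfun : (fun x : ℂ => (x - 1) ^ (n + 1) * ((x - 1)⁻¹ * g (x / (x - 1))))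
        = fun x => (x - 1) * Gn x := by
      funext x
      rw [hGn]
      ring
    rw [hfun, linear_factor n Gn hGnsm z hz]
    -- now pure algebra from hE
    have h2 : iteratedDeriv (n + 1) g (z / (z - 1))
        = (-(z - 1) ^ 2) * (((-1 : ℂ) ^ n * ((n + 1 : ℂ) * (z - 1) ^ n)) * iteratedDeriv n Gn z
          + ((-1 : ℂ) ^ n * (z - 1) ^ (n + 1)) * iteratedDeriv (n + 1) Gn z) := by
      rw [← hE]
      field_simp
      try ring
    rw [h2]
    push_cast
    ring

lemma contDiff_polyeval (P : Polynomial ℂ) : ContDiff ℂ (⊤ : ℕ∞) fun x : ℂ => P.eval x := by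
  induction P using Polynomial.induction_on' with
  | add p q hp hq => simpa [Polynomial.eval_add] using hp.add hq
  | monomial n a =>
    simpa [Polynomial.eval_monomial] using
      (contDiff_const.mul (contDiff_id.pow n) : ContDiff ℂ (⊤ : ℕ∞) fun x : ℂ => a * x ^ n)

lemma iter_const_mul (c : ℂ) {f : ℂ → ℂ} (hf : ContDiff ℂ (⊤ : ℕ∞) f) (n : ℕ) (x : ℂ) :
    iteratedDeriv n (fun y => c * f y) x = c * iteratedDeriv n f x := by
  rw [← iteratedDerivWithin_univ, ← iteratedDerivWithin_univ]
  exact iteratedDerivWithin_const_mul (Set.mem_univ x) uniqueDiffOn_univ c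
    (hf.contDiffWithinAt.of_le (by exact_mod_cast le_top))

end

theorem derivative_identity_z_w (P : Polynomial ℂ) (R : ℂ → ℂ)
    (hR : ∀ z w : ℂ, (1 - z) * (1 - w) = 1 → (1 - z) * P.eval z = R w)
    (p q : ℕ) (z w : ℂ) (hzw : (1 - z) * (1 - w) = 1) :
    z ^ q * (1 - z) ^ (p + 1) *
        ((1 / ((p + q)! : ℂ)) *
          iteratedDeriv (p + q) (fun x : ℂ => x ^ p * (1 - x) ^ q * P.eval x) z) =
      w ^ q * ((1 / ((p + q)! : ℂ)) * iteratedDeriv (p + q) (fun x : ℂ => x ^ p * R x) w) := by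
  have hz1 : z ≠ 1 := by rintro rfl; simp at hzw
  have hw1 : w ≠ 1 := by rintro rfl; simp at hzw
  have hzs : z - 1 ≠ 0 := sub_ne_zero.mpr hz1
  have hws : w - 1 ≠ 0 := sub_ne_zero.mpr hw1
  have hw : w = z / (z - 1) := by
    rw [eq_div_iff hzs]
    linear_combination hzw
  set n := p + q with hn
  set r : ℂ → ℂ := fun x => (1 - x)⁻¹ * P.eval (x / (x - 1)) with hr
  set g : ℂ → ℂ := fun x => x ^ p * r x with hg
  have hrsm : ContDiffOn ℂ (⊤ : ℕ∞) r Sne := by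
    refine ContDiffOn.mul ?_ ?_
    · refine (contDiffOn_const.sub contDiffOn_id).inv fun x hx h => ?_
      exact hx (by simpa using (sub_eq_zero.mp h).symm)
    · exact (contDiff_polyeval P).comp_contDiffOn w_smooth
  have hgsm : ContDiffOn ℂ (⊤ : ℕ∞) g Sne := (contDiffOn_id.pow p).mul hrsm
  have hRr : ∀ y : ℂ, y ≠ 1 → R y = r y := by
    intro y hy
    have hy1 : y - 1 ≠ 0 := sub_ne_zero.mpr hy
    have hy2 : (1 : ℂ) - y ≠ 0 := fun h => hy (by linear_combination -h)
    have h3 : (1 : ℂ) - y / (y - 1) = (1 - y)⁻¹ := by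
      field_simp
      ring
    have h1 : (1 - y / (y - 1)) * (1 - y) = 1 := by
      rw [h3]; field_simp
    have h2 := hR (y / (y - 1)) y h1
    rw [← h2, hr, h3]
  have hstep1 : iteratedDeriv n (fun x : ℂ => x ^ p * R x) w = iteratedDeriv n g w := by
    refine Filter.EventuallyEq.iteratedDeriv_eq n ?_
    filter_upwards [Sne_open.mem_nhds hw1] with y hy
    rw [hg]
    simp only []
    rw [hRr y hy]
  have hstar := star hgsm n z hz1
  rw [← hw] at hstar
  set f : ℂ → ℂ := fun x : ℂ => x ^ p * (1 - x) ^ q * P.eval x with hf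
  have hfsm : ContDiff ℂ (⊤ : ℕ∞) f :=
    ((contDiff_id.pow p).mul ((contDiff_const.sub contDiff_id).pow q)).mul (contDiff_polyeval P)
  have hstep2 : iteratedDeriv n (fun x => (x - 1) ^ n * ((x - 1)⁻¹ * g (x / (x - 1)))) z
      = (-1 : ℂ) ^ (q + 1) * iteratedDeriv n f z := by
    have hmain : iteratedDeriv n (fun x => (x - 1) ^ n * ((x - 1)⁻¹ * g (x / (x - 1)))) z
        = iteratedDeriv n (fun x => (-1 : ℂ) ^ (q + 1) * f x) z := by
      refine Filter.EventuallyEq.iteratedDeriv_eq n ?_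
      filter_upwards [Sne_open.mem_nhds hz1] with y hy
      have hy1 : y - 1 ≠ 0 := sub_ne_zero.mpr hy
      have hwy : y / (y - 1) - 1 ≠ 0 := sub_ne_zero.mpr (w_mem hy)
      have e1 : (y / (y - 1)) / (y / (y - 1) - 1) = y := by
        rw [div_eq_iff hwy]
        field_simp
        ring
      have hy2 : (1 : ℂ) - y ≠ 0 := fun h => hy (by linear_combination -h)
      have h3 : (1 : ℂ) - y / (y - 1) = (1 - y)⁻¹ := by
        field_simp
        ring
      have e2 : ((1 : ℂ) - y / (y - 1))⁻¹ = 1 - y := by rw [h3, inv_inv]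
      show (y - 1) ^ n * ((y - 1)⁻¹ * ((y / (y - 1)) ^ p * r (y / (y - 1))))
          = (-1 : ℂ) ^ (q + 1) * f y
      rw [hr]
      simp only []
      have hq : ((1 : ℂ) - y) ^ q = (-1 : ℂ) ^ q * (y - 1) ^ q := by
        rw [show (1 : ℂ) - y = -(y - 1) by ring, neg_pow]
      simp only [e1, e2, hf, hn]
      rw [div_pow, hq]
      have hq2 : ((-1 : ℂ)) ^ (q * 2) = 1 := by
        rw [show q * 2 = 2 * q by omega, pow_mul]; norm_num
      field_simp
      rw [pow_add]
      linear_combination (y ^ p * (y - 1) ^ q * (y - 1) ^ p * (y - 1) * Polynomial.eval y P) * hq2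
    rw [hmain, iter_const_mul _ hfsm]
  rw [hstep1, hstar, hstep2]
  have hwq : w ^ q = z ^ q / (z - 1) ^ q := by rw [hw, div_pow]
  have hsign : ((-1 : ℂ)) ^ (p + q) * (-1 : ℂ) ^ (q + 1) = (-1 : ℂ) ^ (p + 1) := by
    rw [← pow_add, show p + q + (q + 1) = (p + 1) + 2 * q by omega, pow_add, pow_mul]
    norm_num
  have hpow : (z - 1 : ℂ) ^ (p + q + 1) = (z - 1) ^ q * (z - 1) ^ (p + 1) := by
    rw [← pow_add]; congr 1; omega
  have hneg : ((1 : ℂ) - z) ^ (p + 1) = (-1 : ℂ) ^ (p + 1) * (z - 1) ^ (p + 1) := by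
    rw [show (1 : ℂ) - z = -(z - 1) by ring, neg_pow]
  have scal : w ^ q * ((-1 : ℂ) ^ (p + q) * (z - 1) ^ (p + q + 1) * (-1 : ℂ) ^ (q + 1))
      = z ^ q * (1 - z) ^ (p + 1) := by
    rw [hwq, hpow, hneg]
    field_simp
    linear_combination (z ^ q) * hsign
  rw [hn]
  linear_combination ((1 / ((p + q)! : ℂ)) * iteratedDeriv (p + q) f z) * scal.symm
end

section
/- Let P(z) ∈ ℂ[z] and Q(k) ∈ ℂ[k] with (1-z)P(z) = Σ_{k≥0} Q(k) w^k for (1-z)(1-w)=1, |w|<1. Then for integers p, q ≥ 0: z^q (1-z)^{p+1} · (1/(p+q)!) d^{p+q}/dz^{p+q} [ z^p (1-z)^q P(z) ] = Σ_{k=0}^∞ C(k+p, p+q) Q(k) w^k. -/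
open scoped Nat
open Polynomial

namespace DBS
noncomputable def zf : ℂ → ℂ := fun w => 1 - (1 - w)⁻¹

lemma one_sub_ne {w : ℂ} (hw : ‖w‖ < 1) : (1 : ℂ) - w ≠ 0 := by
  intro h
  have hw1 : w = 1 := by linear_combination -h
  rw [hw1] at hw; simp at hw

lemma one_sub_zf (w : ℂ) : 1 - zf w = (1 - w)⁻¹ := by simp [zf]

lemma one_sub_zf_ne {w : ℂ} (hw : ‖w‖ < 1) : 1 - zf w ≠ 0 := by
  rw [one_sub_zf]; exact inv_ne_zero (one_sub_ne hw)

lemma hasDerivAt_zf {w : ℂ} (hw : ‖w‖ < 1) : HasDerivAt zf (-(1 - zf w)^2) w := by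
  have h1 : HasDerivAt (fun w : ℂ => 1 - w) (-1) w := by
    simpa using (hasDerivAt_id w).const_sub 1
  have h2 : HasDerivAt (fun w : ℂ => (1 - w)⁻¹) (-(-1) / (1 - w)^2) w :=
    h1.inv (one_sub_ne hw)
  have h3 : HasDerivAt zf (-(-(-1) / (1 - w)^2)) w := by
    exact h2.const_sub 1
  convert h3 using 1
  rw [one_sub_zf]
  field_simp

noncomputable def dstep (s : ℤ) (h : ℂ[X]) : ℂ[X] :=
  (s : ℂ) • h - (1 - X) * derivative h

noncomputable def dseq (s₀ : ℤ) (e : ℂ[X]) : ℕ → ℂ[X]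
  | 0 => e
  | r+1 => dstep (s₀ + r) (dseq s₀ e r)

lemma hasDerivAt_Phi (h : ℂ[X]) (s : ℤ) {w : ℂ} (hw : ‖w‖ < 1) :
    HasDerivAt (fun w => h.eval (zf w) * (1 - zf w) ^ s)
      ((dstep s h).eval (zf w) * (1 - zf w) ^ (s+1)) w := by
  set u := 1 - zf w with hu
  have hune : u ≠ 0 := one_sub_zf_ne hw
  have hζ : HasDerivAt zf (-u^2) w := hasDerivAt_zf hw
  have h1 : HasDerivAt (fun x : ℂ => h.eval x) (h.derivative.eval (zf w)) (zf w) :=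
    h.hasDerivAt (zf w)
  have A : HasDerivAt (fun w => h.eval (zf w)) (h.derivative.eval (zf w) * (-u^2)) w :=
    h1.comp w hζ
  have h2 : HasDerivAt (fun x : ℂ => (1 - x) ^ s) ((s : ℂ) * u ^ (s-1) * (-1)) (zf w) := by
    have hpow : HasDerivAt (fun y : ℂ => y ^ s) ((s : ℂ) * u ^ (s - 1)) u :=
      hasDerivAt_zpow s u (Or.inl hune)
    have hlin : HasDerivAt (fun x : ℂ => 1 - x) (-1) (zf w) := by
      simpa using (hasDerivAt_id (zf w)).const_sub 1
    exact hpow.comp (zf w) hlin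
  have B : HasDerivAt (fun w => (1 - zf w) ^ s) (((s : ℂ) * u ^ (s-1) * (-1)) * (-u^2)) w :=
    h2.comp w hζ
  have C := A.mul B
  refine HasDerivAt.congr_deriv C ?_
  have e1 : (dstep s h).eval (zf w) = (s : ℂ) * h.eval (zf w) - u * h.derivative.eval (zf w) := by
    simp [dstep, smul_eq_mul, hu]
  rw [e1]
  have e2 : u ^ (s + 1) = u ^ s * u := by
    rw [zpow_add₀ hune, zpow_one]
  have e3 : u ^ s = u ^ (s - 1) * u := by
    rw [← zpow_add_one₀ hune]; ring_nf
  rw [e2, e3]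
  ring

lemma iterate_derivative_sub (n : ℕ) (a b : ℂ[X]) :
    derivative^[n] (a - b) = derivative^[n] a - derivative^[n] b := by
  induction n generalizing a b with
  | zero => simp
  | succ n ih => simp [Function.iterate_succ_apply, derivative_sub, ih]

lemma iterate_derivative_smul' (n : ℕ) (c : ℂ) (a : ℂ[X]) :
    derivative^[n] (c • a) = c • derivative^[n] a := by
  induction n generalizing a with
  | zero => simp
  | succ n ih => simp [Function.iterate_succ_apply, ih]

lemma aux_pred_deriv (m : ℕ) (f : ℂ[X]) :
    ((m : ℕ) : ℂ) • derivative^[m-1] (derivative f) = ((m : ℕ) : ℂ) • derivative^[m] f := by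
  cases m with
  | zero => simp
  | succ m => rw [Nat.succ_sub_one, ← Function.iterate_succ_apply]

lemma LB (m : ℕ) (f : ℂ[X]) :
    derivative^[m] ((1 - X) * f) =
      (1 - X) * derivative^[m] f - ((m : ℕ) : ℂ) • derivative^[m-1] f := by
  induction m generalizing f with
  | zero => simp
  | succ m ih =>
    rw [Function.iterate_succ_apply]
    have hD : derivative ((1 - X) * f) = (1 - X) * derivative f - f := by
      rw [derivative_mul]; simp; ring
    rw [hD, iterate_derivative_sub, ih (derivative f), aux_pred_deriv m f]
    rw [Nat.succ_sub_one, ← Function.iterate_succ_apply]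
    push_cast
    module

lemma dseq_eq (m : ℕ) (e : ℂ[X]) :
    dseq (1 - (m:ℤ)) e m = ((-1:ℂ))^m • ((1 - X)^m * derivative^[m] e) := by
  induction m generalizing e with
  | zero => simp [dseq]
  | succ m ih =>
    have key : ∀ r, dseq (1 - ((m+1 : ℕ):ℤ)) e (r+1) = dseq (1 - (m:ℤ)) (dstep (-(m:ℤ)) e) r := by
      intro r
      induction r with
      | zero =>
        show dstep _ _ = _
        rw [show ((1:ℤ) - ((m+1:ℕ):ℤ) + ((0:ℕ):ℤ)) = -(m:ℤ) by push_cast; ring]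
        rfl
      | succ r ihr =>
        show dstep _ (dseq _ e (r+1)) = dstep _ (dseq _ _ r)
        rw [ihr, show ((1:ℤ) - ((m+1:ℕ):ℤ) + ((r+1:ℕ):ℤ)) = (1 - (m:ℤ) + (r:ℕ)) by push_cast; ring]
    rw [key m, ih]
    have hstep : dstep (-(m:ℤ)) e = (-(m:ℂ)) • e - (1 - X) * derivative e := by
      simp [dstep]
    rw [hstep, iterate_derivative_sub, iterate_derivative_smul', LB m (derivative e),
      aux_pred_deriv m e]
    rw [← Function.iterate_succ_apply]
    push_cast
    simp only [smul_eq_C_mul, map_pow, map_neg, map_one, map_natCast]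
    ring

lemma hasSum_deriv_step (a : ℕ → ℂ) (C : ℝ) (d : ℕ)
    (ha : ∀ k : ℕ, ‖a k‖ ≤ C * (k+1)^d)
    {G G' : ℂ → ℂ}
    (hG : ∀ w : ℂ, ‖w‖ < 1 → HasSum (fun k => a k * w ^ k) (G w))
    (hG' : ∀ w : ℂ, ‖w‖ < 1 → HasDerivAt G (G' w) w)
    (w : ℂ) (hw : ‖w‖ < 1) :
    HasSum (fun k : ℕ => ((k:ℂ)+1) * a (k+1) * w ^ k) (G' w) := by
  obtain ⟨r, hr0, hwr, hr1⟩ : ∃ r : ℝ, 0 < r ∧ ‖w‖ < r ∧ r < 1 :=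
    ⟨(‖w‖ + 1)/2, by positivity, by linarith [norm_nonneg w], by linarith⟩
  have hrne : r ≠ 0 := hr0.ne'
  have hrinv : (0:ℝ) ≤ r⁻¹ := inv_nonneg.2 hr0.le
  have hC0 : 0 ≤ C := le_trans (norm_nonneg (a 0)) (by simpa using ha 0)
  set u : ℕ → ℝ := fun n => C * r⁻¹ * ((n:ℝ)+1)^(d+1) * r ^ n with hudef
  have hu : Summable u := by
    have h1 : Summable (fun n : ℕ => ((n:ℝ))^(d+1) * r^n) :=
      summable_pow_mul_geometric_of_norm_lt_one (d+1)
        (by rw [Real.norm_eq_abs, abs_of_pos hr0]; exact hr1)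
    have h2 : Summable (fun n : ℕ => (((n+1:ℕ)):ℝ)^(d+1) * r^(n+1)) :=
      (summable_nat_add_iff (f := fun n : ℕ => ((n:ℝ))^(d+1) * r^n) 1).2 h1
    have h3 := h2.mul_left (C * r⁻¹ * r⁻¹)
    apply h3.congr
    intro n
    show C * r⁻¹ * r⁻¹ * ((((n+1:ℕ)):ℝ)^(d+1) * r^(n+1)) = C * r⁻¹ * ((n:ℝ)+1)^(d+1) * r ^ n
    push_cast
    field_simp
    ring
  set g : ℕ → ℂ → ℂ := fun n y => a n * y ^ n with hgdef
  set g' : ℕ → ℂ → ℂ := fun n y => (n:ℂ) * a n * y ^ (n-1) with hg'def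
  have hmem : w ∈ Metric.ball (0:ℂ) r := by simpa [Metric.mem_ball] using hwr
  have hg : ∀ n : ℕ, ∀ y ∈ Metric.ball (0:ℂ) r, HasDerivAt (g n) (g' n y) y := by
    intro n y _
    have h := (hasDerivAt_pow n y).const_mul (a n)
    refine h.congr_deriv ?_
    show a n * ((n:ℂ) * y ^ (n-1)) = (n:ℂ) * a n * y ^ (n-1)
    ring
  have hgb : ∀ n : ℕ, ∀ y ∈ Metric.ball (0:ℂ) r, ‖g' n y‖ ≤ u n := by
    intro n y hy
    have hyr : ‖y‖ ≤ r := by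
      have := Metric.mem_ball.1 hy
      simpa using this.le
    have h1 : ‖g' n y‖ = (n:ℝ) * ‖a n‖ * ‖y‖^(n-1) := by
      simp [hg'def, norm_mul, norm_pow]
    rw [h1]
    have h2 : (n:ℝ) * ‖a n‖ * ‖y‖^(n-1) ≤ (n:ℝ) * (C * ((n:ℝ)+1)^d) * r^(n-1) := by
      have hb : (n:ℝ) * ‖a n‖ ≤ (n:ℝ) * (C * ((n:ℝ)+1)^d) :=
        mul_le_mul le_rfl (by exact_mod_cast ha n) (norm_nonneg _) (Nat.cast_nonneg n)
      exact mul_le_mul hb (pow_le_pow_left₀ (norm_nonneg _) hyr _) (by positivity)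
        (by positivity)
    refine h2.trans ?_
    cases n with
    | zero =>
      simp only [Nat.cast_zero, zero_mul]
      exact mul_nonneg (mul_nonneg (mul_nonneg hC0 hrinv) (by positivity)) (by positivity)
    | succ m =>
      have he : ((m+1:ℕ):ℝ) * (C * (((m+1:ℕ):ℝ)+1)^d) * r^((m+1)-1)
          = C * r⁻¹ * ((((m+1:ℕ)):ℝ) * (((m+1:ℕ):ℝ)+1)^d) * r ^ (m+1) := by
        push_cast
        field_simp
        ring
      rw [he]
      have hle : (((m+1:ℕ)):ℝ) * (((m+1:ℕ):ℝ)+1)^d ≤ (((m+1:ℕ):ℝ)+1)^(d+1) := by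
        rw [pow_succ]
        calc (((m+1:ℕ)):ℝ) * (((m+1:ℕ):ℝ)+1)^d
            ≤ (((m+1:ℕ):ℝ)+1) * (((m+1:ℕ):ℝ)+1)^d :=
              mul_le_mul (by push_cast; linarith) le_rfl (by positivity) (by positivity)
          _ = (((m+1:ℕ):ℝ)+1)^d * (((m+1:ℕ):ℝ)+1) := by ring
      exact mul_le_mul_of_nonneg_right
        (mul_le_mul_of_nonneg_left hle (mul_nonneg hC0 hrinv)) (by positivity)
  have hg0 : Summable (fun n => g n w) := (hG w hw).summable
  have main : HasDerivAt (fun z => ∑' n, g n z) (∑' n, g' n w) w :=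
    hasDerivAt_tsum_of_isPreconnected hu Metric.isOpen_ball
      (convex_ball (0:ℂ) r).isPreconnected hg hgb hmem hg0 hmem
  have hEq : G =ᶠ[nhds w] (fun z => ∑' n, g n z) := by
    filter_upwards [Metric.isOpen_ball.mem_nhds hmem] with y hy
    have hy1 : ‖y‖ < 1 := by
      have : ‖y‖ < r := by simpa [Metric.mem_ball] using hy
      linarith
    exact ((hG y hy1).tsum_eq).symm
  have main' : HasDerivAt G (∑' n, g' n w) w := main.congr_of_eventuallyEq hEq
  have huniq : G' w = ∑' n, g' n w := (hG' w hw).unique main'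
  have hsummable : Summable (fun n => g' n w) :=
    Summable.of_norm_bounded hu (fun n => hgb n w hmem)
  have hS : HasSum (fun n => g' n w) (G' w) := huniq ▸ hsummable.hasSum
  have h00 : g' 0 w = 0 := by simp [hg'def]
  have hshift : HasSum (fun n => g' (n+1) w) (G' w) := by
    refine (hasSum_nat_add_iff (f := fun n => g' n w) 1).2 ?_
    simpa [h00] using hS
  have hfe : (fun n : ℕ => ((n:ℂ)+1) * a (n+1) * w ^ n) = fun n => g' (n+1) w := by
    funext n
    show ((n:ℂ)+1) * a (n+1) * w ^ n = ((n+1:ℕ):ℂ) * a (n+1) * w ^ ((n+1)-1)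
    push_cast
    ring
  rw [hfe]
  exact hshift

lemma hasSum_iter (a : ℕ → ℂ) (C : ℝ) (d : ℕ)
    (ha : ∀ k : ℕ, ‖a k‖ ≤ C * (k+1)^d)
    (Gs : ℕ → ℂ → ℂ)
    (h0 : ∀ w : ℂ, ‖w‖ < 1 → HasSum (fun n => a n * w ^ n) (Gs 0 w))
    (hd : ∀ (r : ℕ) (w : ℂ), ‖w‖ < 1 → HasDerivAt (Gs r) (Gs (r+1) w) w)
    (r : ℕ) : ∀ w : ℂ, ‖w‖ < 1 →
      HasSum (fun n : ℕ => (((n+r).descFactorial r : ℕ) : ℂ) * a (n+r) * w ^ n) (Gs r w) := by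
  induction r with
  | zero =>
    intro w hw
    simpa using h0 w hw
  | succ r ih =>
    intro w hw
    have hC0 : 0 ≤ C := le_trans (norm_nonneg (a 0)) (by simpa using ha 0)
    have hbound : ∀ k : ℕ,
        ‖(((k+r).descFactorial r : ℕ) : ℂ) * a (k+r)‖ ≤ (C * (r+1)^(r+d)) * (k+1)^(r+d) := by
      intro k
      have h1 : ‖(((k+r).descFactorial r : ℕ) : ℂ) * a (k+r)‖
          = (((k+r).descFactorial r : ℕ) : ℝ) * ‖a (k+r)‖ := by
        simp [norm_mul]
      rw [h1]
      have h2 : (((k+r).descFactorial r : ℕ) : ℝ) ≤ ((k+r:ℕ) : ℝ)^r := by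
        exact_mod_cast Nat.descFactorial_le_pow (k+r) r
      have h3 : ‖a (k+r)‖ ≤ C * (((k+r:ℕ):ℝ)+1)^d := by exact_mod_cast ha (k+r)
      have h4 : ((k+r:ℕ) : ℝ) ≤ ((k:ℝ)+1) * ((r:ℝ)+1) := by
        push_cast; nlinarith [Nat.cast_nonneg (α := ℝ) k, Nat.cast_nonneg (α := ℝ) r]
      have h5 : (((k+r:ℕ):ℝ)+1) ≤ ((k:ℝ)+1) * ((r:ℝ)+1) := by
        push_cast; nlinarith [Nat.cast_nonneg (α := ℝ) k, Nat.cast_nonneg (α := ℝ) r]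
      calc (((k+r).descFactorial r : ℕ) : ℝ) * ‖a (k+r)‖
          ≤ ((k+r:ℕ) : ℝ)^r * (C * (((k+r:ℕ):ℝ)+1)^d) :=
            mul_le_mul h2 h3 (norm_nonneg _) (by positivity)
        _ ≤ (((k:ℝ)+1) * ((r:ℝ)+1))^r * (C * (((k:ℝ)+1) * ((r:ℝ)+1))^d) := by
            refine mul_le_mul (pow_le_pow_left₀ (Nat.cast_nonneg _) h4 r) ?_ (by positivity)
              (by positivity)
            exact mul_le_mul_of_nonneg_left (pow_le_pow_left₀ (by positivity) h5 d) hC0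
        _ = (C * (r+1)^(r+d)) * ((k:ℝ)+1)^(r+d) := by
            rw [mul_pow, mul_pow, pow_add, pow_add]
            ring
    have key := hasSum_deriv_step (fun n => (((n+r).descFactorial r : ℕ) : ℂ) * a (n+r))
      (C * (r+1)^(r+d)) (r+d) hbound ih (hd r) w hw
    have hfe : (fun n : ℕ => (((n+(r+1)).descFactorial (r+1) : ℕ) : ℂ) * a (n+(r+1)) * w ^ n)
        = fun k : ℕ => ((k:ℂ)+1) * ((((k+1+r).descFactorial r : ℕ) : ℂ) * a (k+1+r)) * w ^ k := by
      funext k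
      have hnat : (k+(r+1)).descFactorial (r+1) = (k+1) * (k+1+r).descFactorial r := by
        have h := Nat.descFactorial_succ (k+r+1) r
        rw [show k+(r+1) = k+r+1 by omega, h, show k+r+1-r = k+1 by omega,
          show k+1+r = k+r+1 by omega]
      rw [show k+(r+1) = k+1+r by omega] at hnat ⊢
      rw [hnat]
      push_cast
      ring
    rw [hfe]
    exact key

lemma core (j p q : ℕ) {z w : ℂ} (hzw : (1 - z) * (1 - w) = 1) (hw : ‖w‖ < 1) :
    HasSum (fun k : ℕ => ((k + p).choose (p + q) : ℂ) * ((k.choose j : ℕ) : ℂ) * w ^ k)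
      (z ^ q * (1 - z) ^ (p + 1) *
        ((1 / ((p + q)! : ℂ)) *
          (derivative^[p+q]
            ((X:ℂ[X])^p * (1 - X)^q * (((-1:ℂ))^j • X^j))).eval z)) := by
  set m := p + q with hm
  have hv : (1:ℂ) - w ≠ 0 := one_sub_ne hw
  have h1z : (1:ℂ) - z ≠ 0 := by
    intro h; rw [h, zero_mul] at hzw; exact one_ne_zero hzw.symm
  have h1w : (1:ℂ) - w = (1-z)⁻¹ := by
    field_simp
    linear_combination hzw
  have hz : zf w = z := by
    rw [zf, h1w, inv_inv]; ring
  have hwz : w * (1 - z) = -z := by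
    have h2 : w = 1 - (1-z)⁻¹ := by rw [← h1w]; ring
    rw [h2]; field_simp; ring
  set e : ℂ[X] := ((-1:ℂ))^(p+j) • ((X:ℂ[X])^(p+j) * (1 - X)^q) with he
  set a : ℕ → ℂ := fun n => if p ≤ n then (((n-p).choose j : ℕ) : ℂ) else 0 with hadef
  set Gs : ℕ → ℂ → ℂ :=
    fun r w => (dseq (1-(m:ℤ)) e r).eval (zf w) * (1 - zf w) ^ ((1:ℤ) - m + r) with hGs
  have ha : ∀ k : ℕ, ‖a k‖ ≤ 1 * (k+1)^j := by
    intro k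
    rw [one_mul, hadef]
    by_cases hk : p ≤ k
    · simp only [if_pos hk]
      rw [Complex.norm_natCast]
      have h1 : (k-p).choose j ≤ (k+1)^j :=
        le_trans (Nat.choose_le_pow _ _) (Nat.pow_le_pow_left (by omega) j)
      calc (((k-p).choose j : ℕ) : ℝ) ≤ (((k+1)^j : ℕ) : ℝ) := by exact_mod_cast h1
        _ = ((k:ℝ)+1)^j := by push_cast; ring
    · simp only [if_neg hk, norm_zero]
      positivity
  have hd : ∀ (r : ℕ) (w : ℂ), ‖w‖ < 1 → HasDerivAt (Gs r) (Gs (r+1) w) w := by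
    intro r w hw
    have h := hasDerivAt_Phi (dseq (1-(m:ℤ)) e r) ((1:ℤ)-m+r) hw
    have hseq : dseq (1-(m:ℤ)) e (r+1) = dstep ((1:ℤ)-m+r) (dseq (1-(m:ℤ)) e r) := rfl
    have hexp : ((1:ℤ) - m + ((r+1:ℕ):ℤ)) = ((1:ℤ)-m+r) + 1 := by push_cast; ring
    rw [hGs]
    simp only [hseq, hexp]
    exact h
  have h0 : ∀ w : ℂ, ‖w‖ < 1 → HasSum (fun n => a n * w ^ n) (Gs 0 w) := by
    intro w hw
    have hv : (1:ℂ) - w ≠ 0 := one_sub_ne hw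
    have base := hasSum_choose_mul_geometric_of_norm_lt_one j hw
    have base2 := base.mul_left (w^(p+j))
    have hfe : (fun n : ℕ => a (n+(p+j)) * w^(n+(p+j)))
        = fun n : ℕ => w^(p+j) * ((((n+j).choose j : ℕ) : ℂ) * w^n) := by
      funext n
      have h1 : p ≤ n + (p+j) := by omega
      have h2 : n + (p+j) - p = n + j := by omega
      rw [hadef]
      simp only [if_pos h1, h2]
      rw [pow_add]
      ring
    have hs : HasSum (fun n => a (n+(p+j)) * w^(n+(p+j))) (w^(p+j) * (1/(1-w)^(j+1))) := by
      rw [hfe]; exact base2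
    have full := (hasSum_nat_add_iff (f := fun n => a n * w^n) (p+j)).1 hs
    have hzero : ∑ i ∈ Finset.range (p+j), a i * w^i = 0 := by
      apply Finset.sum_eq_zero
      intro i hi
      rw [Finset.mem_range] at hi
      rw [hadef]
      by_cases hip : p ≤ i
      · simp only [if_pos hip]
        have : (i-p).choose j = 0 := Nat.choose_eq_zero_of_lt (by omega)
        rw [this]; simp
      · simp [if_neg hip]
    rw [hzero, add_zero] at full
    have hval : Gs 0 w = w^(p+j) * (1/(1-w)^(j+1)) := by
      have hzf : zf w = -w * (1-w)⁻¹ := by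
        rw [zf]; field_simp; ring
      have hd0 : dseq (1-(m:ℤ)) e 0 = e := rfl
      rw [hGs]
      simp only [hd0]
      rw [one_sub_zf, hzf]
      have hexp : ((1:ℤ) - (m:ℤ) + ((0:ℕ):ℤ)) = 1 - (m:ℤ) := by push_cast; ring
      rw [hexp]
      have hpow : ((1-w)⁻¹ : ℂ) ^ ((1:ℤ) - (m:ℤ)) = (1-w)^(m:ℕ) * (1-w)⁻¹ := by
        rw [inv_zpow, ← zpow_neg, show -((1:ℤ)-(m:ℤ)) = (m:ℤ) - 1 by ring,
          zpow_sub₀ hv, zpow_natCast, zpow_one, div_eq_mul_inv]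
      rw [hpow, he]
      simp only [eval_smul, eval_mul, eval_pow, eval_sub, eval_one, eval_X, smul_eq_mul]
      have hneg : (-w * (1-w)⁻¹) = -(w * (1-w)⁻¹) := by ring
      rw [hneg, neg_pow, show (1:ℂ) - -(w * (1-w)⁻¹) = 1 + w * (1-w)⁻¹ by ring]
      have hsgn : ((-1:ℂ))^(p+j) * ((-1:ℂ))^(p+j) = 1 := by
        rw [← mul_pow]; norm_num
      rw [hm]
      field_simp
      have hs1 : ((-1:ℂ))^(p*2) = 1 := by rw [mul_comm, pow_mul]; norm_num
      have hs2 : ((-1:ℂ))^(j*2) = 1 := by rw [mul_comm, pow_mul]; norm_num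
      ring_nf
      rw [hs1, hs2]
      have hc : ∀ k : ℕ, ((1-w)⁻¹)^k * (1-w)^k = 1 := fun k => by
        rw [← mul_pow, inv_mul_cancel₀ hv, one_pow]
      linear_combination (1-w)*w^p*w^j*(((1-w)⁻¹)^j*(1-w)^j*(((1-w)⁻¹)^q*(1-w)^q) * hc p
        + ((1-w)⁻¹)^q*(1-w)^q * hc j + hc q)
    rw [hval]
    exact full
  have full' := hasSum_iter a 1 j ha Gs h0 hd m w hw
  have key := full'.mul_left (w^q * (1/(m ! : ℂ)))
  set f : ℕ → ℂ := fun k => ((k + p).choose m : ℂ) * ((k.choose j : ℕ) : ℂ) * w ^ k with hf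
  have hfe2 : (fun n : ℕ => f (n+q))
      = fun n : ℕ => (w^q * (1/(m ! : ℂ))) *
          ((((n+m).descFactorial m : ℕ) : ℂ) * a (n+m) * w ^ n) := by
    funext n
    have h1 : p ≤ n + m := by omega
    have h2 : n + m - p = n + q := by omega
    have h3 : n + q + p = n + m := by omega
    rw [hf, hadef]
    simp only [if_pos h1, h2, h3]
    rw [Nat.descFactorial_eq_factorial_mul_choose]
    have hmfact : ((m ! : ℕ) : ℂ) ≠ 0 := by
      exact_mod_cast Nat.factorial_ne_zero m
    push_cast
    rw [pow_add]
    field_simp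
  have hshift : HasSum (fun n => f (n+q)) ((w^q * (1/(m ! : ℂ))) * Gs m w) := by
    rw [hfe2]; exact key
  have full2 := (hasSum_nat_add_iff (f := f) q).1 hshift
  have hzero2 : ∑ i ∈ Finset.range q, f i = 0 := by
    apply Finset.sum_eq_zero
    intro i hi
    rw [Finset.mem_range] at hi
    rw [hf]
    have h0' : (i+p).choose m = 0 := Nat.choose_eq_zero_of_lt (by omega)
    simp only []
    rw [h0']; simp
  rw [hzero2, add_zero] at full2
  have hfinal : (w^q * (1/(m ! : ℂ))) * Gs m w
      = z ^ q * (1 - z) ^ (p + 1) *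
        ((1 / ((m)! : ℂ)) *
          (derivative^[m] ((X:ℂ[X])^p * (1 - X)^q * (((-1:ℂ))^j • X^j))).eval z) := by
    have hd0 : dseq (1-(m:ℤ)) e m = ((-1:ℂ))^m • ((1 - X)^m * derivative^[m] e) := dseq_eq m e
    have hexp : ((1:ℤ) - (m:ℤ) + ((m:ℕ):ℤ)) = 1 := by push_cast; ring
    rw [hGs]
    simp only [hd0, hexp, zpow_one, hz]
    have hegp : e = ((-1:ℂ))^p • ((X:ℂ[X])^p * (1 - X)^q * (((-1:ℂ))^j • X^j)) := by
      rw [he]; simp only [smul_eq_C_mul, map_pow, map_neg, map_one]; ring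
    rw [hegp, iterate_derivative_smul']
    simp only [eval_smul, eval_mul, eval_pow, eval_sub, eval_one, eval_X, smul_eq_mul]
    set A := (derivative^[m] ((X:ℂ[X])^p * (1 - X)^q * (((-1:ℂ))^j • X^j))).eval z with hA
    have wq : w^q * (1-z)^q = ((-1:ℂ))^q * z^q := by rw [← mul_pow, hwz, neg_pow]
    have hsgn : ((-1:ℂ))^q * ((-1:ℂ))^m * ((-1:ℂ))^p = 1 := by
      rw [← pow_add, ← pow_add, show q + m + p = 2*m by omega, pow_mul]; norm_num
    rw [hm] at hsgn ⊢
    linear_combination (((-1:ℂ))^(p+q) * ((-1:ℂ))^p * (1/((p+q) !:ℂ)) * (1-z)^(p+1) * A) * wq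
      + (z^q * (1/((p+q) !:ℂ)) * (1-z)^(p+1) * A) * hsgn
  rw [hfinal] at full2
  exact full2

lemma mem_span_descPochhammer (Q : ℂ[X]) :
    Q ∈ Submodule.span ℂ (Set.range (fun j : ℕ => descPochhammer ℂ j)) := by
  suffices H : ∀ n : ℕ, ∀ Q : ℂ[X], Q.natDegree ≤ n →
      Q ∈ Submodule.span ℂ (Set.range (fun j : ℕ => descPochhammer ℂ j)) from
    H Q.natDegree Q le_rfl
  intro n
  induction n with
  | zero =>
    intro Q hQ
    have hQC : Q = Polynomial.C (Q.coeff 0) := Polynomial.eq_C_of_natDegree_le_zero hQ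
    have h1 : Q = (Q.coeff 0) • descPochhammer ℂ 0 := by
      rw [descPochhammer_zero, smul_eq_C_mul, mul_one, ← hQC]
    rw [h1]
    exact Submodule.smul_mem _ _ (Submodule.subset_span ⟨0, rfl⟩)
  | succ n ih =>
    intro Q hQ
    set c := Q.coeff (n+1) with hc
    set Q' := Q - c • descPochhammer ℂ (n+1) with hQ'
    have hmon : (descPochhammer ℂ (n+1)).Monic := monic_descPochhammer ℂ (n+1)
    have hdeg : (descPochhammer ℂ (n+1)).natDegree = n+1 := descPochhammer_natDegree ℂ (n+1)
    have hQ'deg : Q'.natDegree ≤ n := by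
      rw [Polynomial.natDegree_le_iff_coeff_eq_zero]
      intro mm hmm
      rw [hQ', Polynomial.coeff_sub, Polynomial.coeff_smul]
      rcases Nat.lt_or_ge (n+1) mm with h | h
      · rw [Polynomial.coeff_eq_zero_of_natDegree_lt (lt_of_le_of_lt hQ h),
          Polynomial.coeff_eq_zero_of_natDegree_lt (by rw [hdeg]; exact h)]
        simp
      · have hmm1 : mm = n+1 := by omega
        rw [hmm1]
        have : (descPochhammer ℂ (n+1)).coeff (n+1) = 1 := by
          have := hmon.coeff_natDegree
          rwa [hdeg] at this
        rw [this]
        simp [hc]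
    have h2 := ih Q' hQ'deg
    have h3 : Q = Q' + c • descPochhammer ℂ (n+1) := by rw [hQ']; ring
    rw [h3]
    exact Submodule.add_mem _ h2 (Submodule.smul_mem _ _ (Submodule.subset_span ⟨n+1, rfl⟩))

lemma iteratedDeriv_polyeval (B : ℂ[X]) (n : ℕ) :
    iteratedDeriv n (fun x : ℂ => B.eval x) = fun x => (derivative^[n] B).eval x := by
  induction n with
  | zero => simp
  | succ n ih =>
    rw [iteratedDeriv_succ, ih]
    funext x
    rw [Function.iterate_succ_apply']
    exact Polynomial.deriv (𝕜 := ℂ) (p := derivative^[n] B)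

lemma iterate_derivative_finset_sum {ι : Type*} (n : ℕ) (s : Finset ι) (f : ι → ℂ[X]) :
    derivative^[n] (∑ j ∈ s, f j) = ∑ j ∈ s, derivative^[n] (f j) := by
  induction n with
  | zero => simp
  | succ n ih =>
    rw [Function.iterate_succ_apply', ih, derivative_sum]
    exact Finset.sum_congr rfl fun j _ => (Function.iterate_succ_apply' _ n (f j)).symm

noncomputable def P0 (c : ℕ →₀ ℂ) : ℂ[X] :=
  ∑ j ∈ c.support, (c j * j !) • (((-1:ℂ))^j • (X:ℂ[X])^j)

lemma combined (c : ℕ →₀ ℂ) (p q : ℕ) {z w : ℂ}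
    (hzw : (1 - z) * (1 - w) = 1) (hw : ‖w‖ < 1) :
    HasSum (fun k : ℕ => ((k + p).choose (p + q) : ℂ) *
        ((c.sum fun j a => a • descPochhammer ℂ j).eval (k:ℂ)) * w ^ k)
      (z ^ q * (1 - z) ^ (p + 1) *
        ((1 / ((p + q)! : ℂ)) *
          (derivative^[p+q] ((X:ℂ[X])^p * (1 - X)^q * P0 c)).eval z)) := by
  have hsum : ∀ k : ℕ, ((k + p).choose (p + q) : ℂ) *
        ((c.sum fun j a => a • descPochhammer ℂ j).eval (k:ℂ)) * w ^ k
      = ∑ j ∈ c.support, (c j * j !) *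
          (((k + p).choose (p + q) : ℂ) * ((k.choose j : ℕ) : ℂ) * w ^ k) := by
    intro k
    rw [Finsupp.sum, eval_finset_sum, Finset.mul_sum, Finset.sum_mul]
    apply Finset.sum_congr rfl
    intro j _
    rw [eval_smul, smul_eq_mul]
    have hdp : (descPochhammer ℂ j).eval ((k:ℕ):ℂ) = ((k.descFactorial j : ℕ) : ℂ) :=
      descPochhammer_eval_eq_descFactorial ℂ k j
    rw [hdp, Nat.descFactorial_eq_factorial_mul_choose]
    push_cast
    ring
  have heach : ∀ j ∈ c.support,
      HasSum (fun k : ℕ => (c j * j !) *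
          (((k + p).choose (p + q) : ℂ) * ((k.choose j : ℕ) : ℂ) * w ^ k))
        ((c j * j !) * (z ^ q * (1 - z) ^ (p + 1) *
          ((1 / ((p + q)! : ℂ)) *
            (derivative^[p+q] ((X:ℂ[X])^p * (1 - X)^q * (((-1:ℂ))^j • X^j))).eval z))) :=
    fun j _ => (core j p q hzw hw).mul_left _
  have htot := hasSum_sum heach
  have hval : ∑ j ∈ c.support, ((c j * j !) * (z ^ q * (1 - z) ^ (p + 1) *
          ((1 / ((p + q)! : ℂ)) *
            (derivative^[p+q] ((X:ℂ[X])^p * (1 - X)^q * (((-1:ℂ))^j • X^j))).eval z)))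
      = z ^ q * (1 - z) ^ (p + 1) *
        ((1 / ((p + q)! : ℂ)) *
          (derivative^[p+q] ((X:ℂ[X])^p * (1 - X)^q * P0 c)).eval z) := by
    have hmul : (X:ℂ[X])^p * (1 - X)^q * P0 c
        = ∑ j ∈ c.support, (c j * j !) •
            ((X:ℂ[X])^p * (1 - X)^q * (((-1:ℂ))^j • X^j)) := by
      rw [P0, Finset.mul_sum]
      apply Finset.sum_congr rfl
      intro j _
      rw [mul_smul_comm]
    rw [hmul, iterate_derivative_finset_sum]
    have : ∀ j ∈ c.support, derivative^[p+q]
        ((c j * j !) • ((X:ℂ[X])^p * (1 - X)^q * (((-1:ℂ))^j • X^j)))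
        = (c j * j !) • derivative^[p+q] ((X:ℂ[X])^p * (1 - X)^q * (((-1:ℂ))^j • X^j)) := by
      intro j _
      exact iterate_derivative_smul (c j * j !) _ (p+q)
    rw [Finset.sum_congr rfl this, eval_finset_sum, Finset.mul_sum, Finset.mul_sum]
    apply Finset.sum_congr rfl
    intro j _
    rw [eval_smul, smul_eq_mul]
    ring
  rw [hval] at htot
  have hfe : (fun k : ℕ => ((k + p).choose (p + q) : ℂ) *
        ((c.sum fun j a => a • descPochhammer ℂ j).eval (k:ℂ)) * w ^ k)
      = fun k : ℕ => ∑ j ∈ c.support, (c j * j !) *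
          (((k + p).choose (p + q) : ℂ) * ((k.choose j : ℕ) : ℂ) * w ^ k) := funext hsum
  rw [hfe]
  exact htot

end DBS

open DBS in
theorem derivative_binomial_series (P : Polynomial ℂ) (Q : Polynomial ℂ)
    (hPQ : ∀ z w : ℂ, (1 - z) * (1 - w) = 1 → ‖w‖ < 1 →
      HasSum (fun k : ℕ => Q.eval (k : ℂ) * w ^ k) ((1 - z) * P.eval z))
    (p q : ℕ) (z w : ℂ) (hzw : (1 - z) * (1 - w) = 1) (hw : ‖w‖ < 1) :
    HasSum (fun k : ℕ => ((k + p).choose (p + q) : ℂ) * Q.eval (k : ℂ) * w ^ k)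
      (z ^ q * (1 - z) ^ (p + 1) *
        ((1 / ((p + q)! : ℂ)) *
          iteratedDeriv (p + q) (fun x : ℂ => x ^ p * (1 - x) ^ q * P.eval x) z)) := by
  have hw' : ‖w‖ < 1 := hw
  obtain ⟨c, hcQ⟩ := Finsupp.mem_span_range_iff_exists_finsupp.mp (mem_span_descPochhammer Q)
  -- P agrees with P0 c
  have hPP0 : P = P0 c := by
    apply Polynomial.eq_of_infinite_eval_eq
    have hsub : (fun t : ℝ => zf (t:ℂ)) '' (Set.Ioo (0:ℝ) 1) ⊆
        {x | Polynomial.eval x P = Polynomial.eval x (P0 c)} := by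
      rintro x ⟨t, ht, rfl⟩
      have htn : ‖(t:ℂ)‖ < 1 := by
        rw [Complex.norm_real, Real.norm_eq_abs, abs_of_pos ht.1]
        exact ht.2
      have hne : (1:ℂ) - t ≠ 0 := one_sub_ne htn
      have hcond : (1 - zf (t:ℂ)) * (1 - (t:ℂ)) = 1 := by
        rw [one_sub_zf]
        exact inv_mul_cancel₀ hne
      have h1 := hPQ (zf (t:ℂ)) (t:ℂ) hcond htn
      have h2 := combined c 0 0 hcond htn
      simp only [Nat.add_zero, Nat.choose_zero_right, Nat.cast_one, one_mul, pow_zero,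
        Nat.factorial_zero, Function.iterate_zero, id_eq, mul_one] at h2
      rw [hcQ] at h2
      have h2' : HasSum (fun k : ℕ => Q.eval (k:ℂ) * (t:ℂ) ^ k)
          ((1 - zf (t:ℂ)) * ((P0 c).eval (zf (t:ℂ)))) := by
        convert h2 using 2
        · simp
        · ring
      have := h1.unique h2'
      have hnz : (1:ℂ) - zf (t:ℂ) ≠ 0 := by
        rw [one_sub_zf]
        exact inv_ne_zero hne
      exact mul_left_cancel₀ hnz this
    apply Set.Infinite.mono hsub
    have hinf : (Set.Ioo (0:ℝ) 1).Infinite := Set.Ioo_infinite (by norm_num : (0:ℝ) < 1)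
    apply hinf.image
    · intro t₁ h₁ t₂ h₂ heq
      have e1 : (1 - (t₁:ℂ))⁻¹ = (1 - (t₂:ℂ))⁻¹ := by
        have := congrArg (fun x => 1 - x) heq
        simpa [one_sub_zf] using congrArg (fun u => (1:ℂ) - u) heq
      have e2 : (1:ℂ) - t₁ = 1 - t₂ := by
        have hne1 : (1:ℂ) - t₁ ≠ 0 := one_sub_ne (by
          rw [Complex.norm_real, Real.norm_eq_abs, abs_of_pos h₁.1]; exact h₁.2)
        exact inv_injective e1
      have : (t₁:ℂ) = t₂ := by linear_combination -e2
      exact_mod_cast this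
  have hfun : (fun x : ℂ => x ^ p * (1 - x) ^ q * P.eval x)
      = fun x : ℂ => ((X:ℂ[X])^p * (1 - X)^q * P).eval x := by
    funext x
    simp
  rw [hfun, iteratedDeriv_polyeval, hPP0]
  have h3 := combined c p q hzw hw'
  rw [hcQ] at h3
  exact h3
end

section
/- The multiple Legendre polynomial L_n(p_1,q_1;…;p_n,q_n;z), multiplied by (p_1+q_1)!⋯(p_n+q_n)!, is a bisymmetric function of (p_1,…,p_n) and (q_1,…,q_n): for any permutations σ, τ of {1,…,n}, (p_1+q_1)!⋯(p_n+q_n)! · L_n(p_1,q_1;…;p_n,q_n;z) = (p_{σ(1)}+q_{τ(1)})!⋯(p_{σ(n)}+q_{τ(n)})! · L_n(p_{σ(1)},q_{τ(1)};…;p_{σ(n)},q_{τ(n)};z). -/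
open scoped Nat

open Polynomial Finset


noncomputable def TT (Q : Polynomial ℂ) (k : ℕ) : ℂ :=
  Q.sum fun j a => (-1) ^ j * (k.choose j : ℂ) * a

lemma TT_add (Q R : Polynomial ℂ) (k : ℕ) : TT (Q + R) k = TT Q k + TT R k := by
  unfold TT
  apply Polynomial.sum_add_index <;> intros <;> ring

lemma TT_monomial (j : ℕ) (a : ℂ) (k : ℕ) :
    TT (Polynomial.monomial j a) k = (-1) ^ j * (k.choose j : ℂ) * a := by
  unfold TT
  apply Polynomial.sum_monomial_index
  ring

lemma TT_C_mul (a : ℂ) (Q : Polynomial ℂ) (k : ℕ) : TT (Polynomial.C a * Q) k = a * TT Q k := by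
  unfold TT
  rw [← smul_eq_C_mul, Polynomial.sum_smul_index Q a _ (fun i => by ring), Polynomial.sum,
    Polynomial.sum, Finset.mul_sum]
  exact Finset.sum_congr rfl fun i _ => by ring

lemma TT_zero (k : ℕ) : TT 0 k = 0 := by unfold TT; simp [Polynomial.sum]

lemma TT_smul (n : ℕ) (Q : Polynomial ℂ) (k : ℕ) : TT (n • Q) k = n * TT Q k := by
  have : (n • Q) = Polynomial.C (n : ℂ) * Q := by
    rw [nsmul_eq_mul, map_natCast]
  rw [this, TT_C_mul]

lemma hockey (k j : ℕ) : ∑ m ∈ Finset.range k, (m.choose j) = k.choose (j + 1) := by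
  induction k with
  | zero => simp
  | succ k ih =>
    rw [Finset.sum_range_succ, ih, Nat.choose_succ_succ]
    simp [Nat.succ_eq_add_one, Nat.add_comm]

lemma TT_X_mul (Q : Polynomial ℂ) (k : ℕ) :
    TT (X * Q) k = -∑ m ∈ Finset.range k, TT Q m := by
  induction Q using Polynomial.induction_on' with
  | add p r hp hr =>
      rw [mul_add, TT_add, hp, hr]
      simp only [TT_add, Finset.sum_add_distrib]
      ring
  | monomial j a =>
      rw [Polynomial.X_mul_monomial, TT_monomial]
      have : ∀ m, TT (Polynomial.monomial j a) m = (-1) ^ j * (m.choose j : ℂ) * a :=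
        fun m => TT_monomial j a m
      simp only [this, ← Finset.sum_mul, ← Finset.mul_sum]
      rw [← Nat.cast_sum, hockey]
      ring

lemma TT_neg (Q : Polynomial ℂ) (k : ℕ) : TT (-Q) k = -TT Q k := by
  have := TT_add Q (-Q) k
  simp [TT_zero] at this
  linear_combination -this

lemma TT_sub (Q R : Polynomial ℂ) (k : ℕ) : TT (Q - R) k = TT Q k - TT R k := by
  rw [sub_eq_add_neg, TT_add, TT_neg]; ring

lemma TT_one_sub_X_mul_monomial (j : ℕ) (a : ℂ) (k : ℕ) :
    TT ((1 - X) * Polynomial.monomial j a) k = (-1) ^ j * ((k + 1).choose (j + 1) : ℂ) * a := by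
  rw [sub_mul, one_mul, Polynomial.X_mul_monomial, TT_sub, TT_monomial, TT_monomial,
    Nat.choose_succ_succ]
  push_cast
  ring

lemma TT_one_sub_X_mul (Q : Polynomial ℂ) (k : ℕ) :
    TT ((1 - X) * Q) k = ∑ m ∈ Finset.range (k + 1), TT Q m := by
  induction Q using Polynomial.induction_on' with
  | add p r hp hr =>
      rw [mul_add, TT_add, hp, hr]
      simp only [TT_add, Finset.sum_add_distrib]
  | monomial j a =>
      rw [TT_one_sub_X_mul_monomial]
      simp only [TT_monomial, ← Finset.sum_mul, ← Finset.mul_sum]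
      rw [← Nat.cast_sum, hockey]

lemma TT_one_sub_X_mul_derivative (Q : Polynomial ℂ) (k : ℕ) :
    TT ((1 - X) * Polynomial.derivative Q) k = (k + 1) * (TT Q k - TT Q (k + 1)) := by
  induction Q using Polynomial.induction_on' with
  | add p r hp hr =>
      rw [map_add, mul_add, TT_add, hp, hr, TT_add, TT_add]
      ring
  | monomial j a =>
      rw [Polynomial.derivative_monomial]
      match j with
      | 0 => simp [Polynomial.monomial_zero_right, TT_zero, ← Polynomial.monomial_zero_left, TT_monomial]
      | i + 1 =>
          rw [TT_one_sub_X_mul_monomial, TT_monomial, TT_monomial]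
          have h := Nat.add_one_mul_choose_eq k i
          have h2 : ((k:ℂ)+1) * (k.choose i : ℂ) = ((k+1).choose (i+1) : ℂ) * ((i:ℂ)+1) := by
            exact_mod_cast congrArg (Nat.cast : ℕ → ℂ) h
          have h3 : (((k+1).choose (i+1) : ℕ) : ℂ) = (k.choose i : ℂ) + (k.choose (i+1) : ℂ) := by
            rw [← Nat.cast_add, ← Nat.choose_succ_succ]
          push_cast
          linear_combination (-(-1:ℂ)^i * a) * h2 + (-((k:ℂ)+1) * (-1:ℂ)^i * a) * h3

lemma TT_X_one_sub_X_derivative (Q : Polynomial ℂ) (k : ℕ) :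
    TT (X * ((1 - X) * Polynomial.derivative Q)) k
      = k * TT Q k - ∑ m ∈ Finset.range k, TT Q m := by
  rw [TT_X_mul]
  simp only [fun m => TT_one_sub_X_mul_derivative Q m]
  induction k with
  | zero => simp
  | succ k ih =>
      rw [Finset.sum_range_succ, Finset.sum_range_succ]
      push_cast
      linear_combination ih

lemma iterD_add (n : ℕ) (f g : Polynomial ℂ) :
    Polynomial.derivative^[n] (f + g)
      = Polynomial.derivative^[n] f + Polynomial.derivative^[n] g := by
  induction n generalizing f g with
  | zero => simp
  | succ n ih => rw [Function.iterate_succ_apply, Function.iterate_succ_apply,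
      Function.iterate_succ_apply, Polynomial.derivative_add, ih]

lemma iterD_neg (n : ℕ) (f : Polynomial ℂ) :
    Polynomial.derivative^[n] (-f) = -Polynomial.derivative^[n] f := by
  induction n generalizing f with
  | zero => simp
  | succ n ih => rw [Function.iterate_succ_apply, Function.iterate_succ_apply,
      Polynomial.derivative_neg, ih]

lemma iterD_X_mul (n : ℕ) (f : Polynomial ℂ) :
    Polynomial.derivative^[n + 1] (X * f)
      = X * Polynomial.derivative^[n + 1] f
        + ((n + 1 : ℕ) : Polynomial ℂ) * Polynomial.derivative^[n] f := by
  induction n generalizing f with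
  | zero =>
      simp only [zero_add, Function.iterate_one, Function.iterate_zero, id_eq]
      rw [Polynomial.derivative_mul, Polynomial.derivative_X]
      push_cast
      ring
  | succ n ih =>
      rw [Function.iterate_succ_apply, Polynomial.derivative_mul, Polynomial.derivative_X, one_mul,
        iterD_add, ih]
      simp only [Function.iterate_succ_apply]
      push_cast
      ring

lemma iterD_one_sub_X_mul (n : ℕ) (f : Polynomial ℂ) :
    Polynomial.derivative^[n + 1] ((1 - X) * f)
      = (1 - X) * Polynomial.derivative^[n + 1] f
        - ((n + 1 : ℕ) : Polynomial ℂ) * Polynomial.derivative^[n] f := by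
  induction n generalizing f with
  | zero =>
      simp only [zero_add, Function.iterate_one, Function.iterate_zero, id_eq]
      rw [Polynomial.derivative_mul, Polynomial.derivative_sub, Polynomial.derivative_one,
        Polynomial.derivative_X]
      push_cast
      ring
  | succ n ih =>
      rw [Function.iterate_succ_apply, Polynomial.derivative_mul, Polynomial.derivative_sub,
        Polynomial.derivative_one, Polynomial.derivative_X,
        show ((0 : Polynomial ℂ) - 1) * f = -f by ring, iterD_add, iterD_neg, ih]
      simp only [Function.iterate_succ_apply]
      push_cast
      ring

noncomputable def SOp (p q : ℕ) (Q : Polynomial ℂ) : Polynomial ℂ :=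
  X ^ q * (1 - X) ^ p * Polynomial.derivative^[p + q] (X ^ p * (1 - X) ^ q * Q)

lemma key_p (p q : ℕ) (H : Polynomial ℂ) :
    X ^ q * (1 - X) ^ (p + 1)
        * (X * Polynomial.derivative H + ((p + q + 1 : ℕ) : Polynomial ℂ) * H)
      = X * (1 - X) * Polynomial.derivative (X ^ q * (1 - X) ^ p * H)
        + ((p + 1 : ℕ) : Polynomial ℂ) * ((1 - X) * (X ^ q * (1 - X) ^ p * H))
        + ((p : ℕ) : Polynomial ℂ) * (X * (X ^ q * (1 - X) ^ p * H)) := by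
  rcases p with _ | p <;> rcases q with _ | q <;>
    · simp only [Polynomial.derivative_mul, Polynomial.derivative_pow, Polynomial.derivative_one,
        Polynomial.derivative_sub, Polynomial.derivative_X, Polynomial.C_eq_natCast, pow_zero,
        Nat.add_sub_cancel, Nat.cast_ofNat, Nat.cast_zero, Nat.cast_one]
      push_cast
      ring

lemma key_q (q : ℕ) (H : Polynomial ℂ) :
    X ^ (q + 1) * ((1 - X) * Polynomial.derivative H - ((q + 1 : ℕ) : Polynomial ℂ) * H)
      = X * (1 - X) * Polynomial.derivative (X ^ q * H)
        - ((q : ℕ) : Polynomial ℂ) * ((1 - X) * (X ^ q * H))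
        - ((q + 1 : ℕ) : Polynomial ℂ) * (X * (X ^ q * H)) := by
  rcases q with _ | q <;>
    · simp only [Polynomial.derivative_mul, Polynomial.derivative_pow, Polynomial.derivative_one,
        Polynomial.derivative_sub, Polynomial.derivative_X, Polynomial.C_eq_natCast, pow_zero,
        Nat.add_sub_cancel, Nat.cast_zero, Nat.cast_one]
      push_cast
      ring

lemma SOp_succ_p (p q : ℕ) (Q : Polynomial ℂ) :
    SOp (p + 1) q Q
      = X * (1 - X) * Polynomial.derivative (SOp p q Q)
        + ((p + 1 : ℕ) : Polynomial ℂ) * ((1 - X) * SOp p q Q)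
        + ((p : ℕ) : Polynomial ℂ) * (X * SOp p q Q) := by
  unfold SOp
  rw [show p + 1 + q = (p + q) + 1 from by omega,
    show X ^ (p + 1) * (1 - X) ^ q * Q = X * (X ^ p * (1 - X) ^ q * Q) from by ring,
    iterD_X_mul, Function.iterate_succ_apply',
    show (p + q : ℕ) + 1 = (p + q + 1 : ℕ) from rfl]
  exact key_p p q _

lemma SOp_succ_q (q : ℕ) (Q : Polynomial ℂ) :
    SOp 0 (q + 1) Q
      = X * (1 - X) * Polynomial.derivative (SOp 0 q Q)
        - ((q : ℕ) : Polynomial ℂ) * ((1 - X) * SOp 0 q Q)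
        - ((q + 1 : ℕ) : Polynomial ℂ) * (X * SOp 0 q Q) := by
  unfold SOp
  rw [show (0 : ℕ) + (q + 1) = q + 1 from by omega, show (0 : ℕ) + q = q from by omega,
    show X ^ 0 * (1 - X) ^ (q + 1) * Q = (1 - X) * (X ^ 0 * (1 - X) ^ q * Q) from by ring,
    iterD_one_sub_X_mul, Function.iterate_succ_apply']
  simp only [pow_zero, one_mul, mul_one]
  exact key_q q _

lemma TT_natCast_mul (n : ℕ) (R : Polynomial ℂ) (k : ℕ) :
    TT ((n : Polynomial ℂ) * R) k = (n : ℂ) * TT R k := by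
  rw [show ((n : Polynomial ℂ)) = Polynomial.C (n : ℂ) from (map_natCast Polynomial.C n).symm,
    TT_C_mul]

lemma TT_SOp_zero (q : ℕ) : ∀ (Q : Polynomial ℂ) (k : ℕ),
    TT (SOp 0 q Q) k = ((q)! : ℂ) * (k.choose q : ℂ) * TT Q k := by
  induction q with
  | zero =>
      intro Q k
      simp [SOp, Nat.factorial]
  | succ q ihq =>
      intro Q k
      rw [SOp_succ_q, TT_sub, TT_sub, TT_natCast_mul, TT_natCast_mul, mul_assoc X (1 - X),
        TT_X_one_sub_X_derivative, TT_one_sub_X_mul, TT_X_mul]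
      simp only [ihq]
      rw [Finset.sum_range_succ]
      have key : ((q+1)! : ℂ) * (k.choose (q+1) : ℂ)
          = ((k : ℂ) - q) * ((q)! : ℂ) * (k.choose q : ℂ) := by
        rcases lt_or_ge k q with h | h
        · rw [Nat.choose_eq_zero_of_lt h, Nat.choose_eq_zero_of_lt (by omega)]
          simp
        · have h2 : (k.choose (q+1) * (q+1) : ℕ) = (k.choose q * (k - q) : ℕ) :=
            Nat.choose_succ_right_eq k q
          have h3 : ((k - q : ℕ) : ℂ) = (k : ℂ) - q := by push_cast [h]; ring
          have h4 : ((k.choose (q+1) : ℕ) : ℂ) * ((q : ℂ) + 1)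
              = (k.choose q : ℂ) * ((k : ℂ) - q) := by
            rw [← h3]
            exact_mod_cast congrArg (Nat.cast : ℕ → ℂ) h2
          have h5 : ((q+1)! : ℂ) = ((q : ℂ) + 1) * ((q)! : ℂ) := by
            rw [Nat.factorial_succ]; push_cast; ring
          rw [h5]
          linear_combination ((q)! : ℂ) * h4
      push_cast
      push_cast at key
      linear_combination (-(TT Q k)) * key

lemma TT_SOp (p q : ℕ) : ∀ (Q : Polynomial ℂ) (k : ℕ),
    TT (SOp p q Q) k = (((p + q))! : ℂ) * (((k + p).choose (p + q)) : ℂ) * TT Q k := by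
  induction p with
  | zero => intro Q k; simpa using TT_SOp_zero q Q k
  | succ p ihp =>
      intro Q k
      rw [show k + (p + 1) = k + p + 1 from by omega]
      rw [SOp_succ_p, TT_add, TT_add, TT_natCast_mul, TT_natCast_mul, mul_assoc X (1 - X),
        TT_X_one_sub_X_derivative, TT_one_sub_X_mul, TT_X_mul]
      simp only [ihp]
      rw [Finset.sum_range_succ]
      have key : (((p + 1 + q))! : ℂ) * (((k + p + 1).choose (p + 1 + q)) : ℂ)
          = ((k : ℂ) + p + 1) * ((p + q)! : ℂ) * ((k + p).choose (p + q) : ℂ) := by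
        have h2 := Nat.add_one_mul_choose_eq (k + p) (p + q)
        have h4 : ((k : ℂ) + p + 1) * ((k + p).choose (p + q) : ℂ)
            = (((k + p + 1).choose (p + q + 1)) : ℂ) * ((p : ℂ) + q + 1) := by
          exact_mod_cast congrArg (Nat.cast : ℕ → ℂ) h2
        have h5 : ((p + 1 + q)! : ℂ) = ((p : ℂ) + q + 1) * ((p + q)! : ℂ) := by
          rw [show p + 1 + q = (p + q) + 1 from by omega, Nat.factorial_succ]; push_cast; ring
        rw [h5, show p + 1 + q = (p + q) + 1 from by omega]
        linear_combination (-((p + q)! : ℂ)) * h4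
      push_cast
      push_cast at key
      linear_combination (-(TT Q k)) * key

lemma TT_inj (Q : Polynomial ℂ) (h : ∀ k, TT Q k = 0) : Q = 0 := by
  have H : ∀ j, Q.coeff j = 0 := by
    intro j
    induction j using Nat.strong_induction_on with
    | _ j ih =>
      have h0 := h j
      unfold TT at h0
      rw [Polynomial.sum_def,
        Finset.sum_eq_single j
          (fun b _ hbj => by
            rcases lt_or_gt_of_ne hbj with hlt | hgt
            · rw [ih b hlt]; ring
            · rw [Nat.choose_eq_zero_of_lt hgt]; simp)
          (fun hj => by rw [Polynomial.notMem_support_iff.mp hj]; ring)] at h0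
      have hne : ((-1 : ℂ)) ^ j ≠ 0 := pow_ne_zero _ (by norm_num)
      simp only [Nat.choose_self, Nat.cast_one, mul_one] at h0
      rcases mul_eq_zero.mp h0 with h1 | h1
      · simp at h1
      · exact h1
  exact Polynomial.ext fun j => by rw [H j, Polynomial.coeff_zero]

lemma TT_congr (Q R : Polynomial ℂ) (h : ∀ k, TT Q k = TT R k) : Q = R := by
  have : Q - R = 0 := TT_inj _ fun k => by rw [TT_sub, h k, sub_self]
  linear_combination (exp := 1) this

noncomputable def Pn : List (ℕ × ℕ) → Polynomial ℂ
  | [] => 1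
  | (p, q) :: r => Polynomial.C (1 / ((p + q)! : ℂ)) * SOp p q (Pn r)

lemma iteratedDeriv_eval (n : ℕ) (P : Polynomial ℂ) :
    iteratedDeriv n (fun x => P.eval x) = fun x => (Polynomial.derivative^[n] P).eval x := by
  induction n generalizing P with
  | zero => simp
  | succ n ih =>
      rw [iteratedDeriv_succ', Function.iterate_succ_apply,
        show (deriv fun x => P.eval x) = fun x => (Polynomial.derivative P).eval x from
          funext fun x => Polynomial.deriv P, ih]

lemma LegAux_eq (L : List (ℕ × ℕ)) : ∀ z : ℂ, LegAux L z = (Pn L).eval z := by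
  induction L with
  | nil => intro z; simp [LegAux, Pn]
  | cons pq r ih =>
      obtain ⟨p, q⟩ := pq
      intro z
      simp only [LegAux]
      have harg : (fun x : ℂ => x ^ p * (1 - x) ^ q * LegAux r x)
          = fun x => ((X : Polynomial ℂ) ^ p * (1 - X) ^ q * Pn r).eval x := funext fun x => by
        simp [ih x]
      rw [harg, iteratedDeriv_eval]
      simp only [Pn, SOp, Polynomial.eval_mul, Polynomial.eval_pow, Polynomial.eval_sub,
        Polynomial.eval_one, Polynomial.eval_X, Polynomial.eval_C]
      ring

lemma TT_Pn (L : List (ℕ × ℕ)) (k : ℕ) :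
    TT (Pn L) k = (L.map fun pq => (((k + pq.1).choose (pq.1 + pq.2) : ℕ) : ℂ)).prod := by
  induction L with
  | nil =>
      rw [show (Pn [] : Polynomial ℂ) = Polynomial.monomial 0 1 by simp [Pn], TT_monomial]
      simp
  | cons pq r ih =>
      obtain ⟨p, q⟩ := pq
      simp only [Pn, List.map_cons, List.prod_cons]
      rw [TT_C_mul, TT_SOp, ih]
      have hfac : ((p + q)! : ℂ) ≠ 0 := Nat.cast_ne_zero.mpr (Nat.factorial_ne_zero _)
      field_simp

lemma desc_split (p q k : ℕ) :
    ((p + q)! : ℕ) * (k + p).choose (p + q)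
      = (k + p).descFactorial p * k.descFactorial q := by
  rw [← Nat.descFactorial_eq_factorial_mul_choose]
  induction p with
  | zero => simp
  | succ p ih =>
      rw [show k + (p + 1) = (k + p) + 1 from by omega,
        show p + 1 + q = (p + q) + 1 from by omega,
        Nat.succ_descFactorial_succ, Nat.succ_descFactorial_succ, ih]
      ring

lemma prod_eq_desc (L : List (ℕ × ℕ)) (k : ℕ) :
    (L.map fun pq => ((pq.1 + pq.2)! : ℂ)).prod
        * (L.map fun pq => (((k + pq.1).choose (pq.1 + pq.2) : ℕ) : ℂ)).prod
      = (L.map fun pq => (((k + pq.1).descFactorial pq.1 : ℕ) : ℂ)).prod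
        * (L.map fun pq => ((k.descFactorial pq.2 : ℕ) : ℂ)).prod := by
  induction L with
  | nil => simp
  | cons pq r ih =>
      obtain ⟨p, q⟩ := pq
      simp only [List.map_cons, List.prod_cons]
      have h := desc_split p q k
      have hC : ((p + q)! : ℂ) * ((k + p).choose (p + q) : ℂ)
          = ((k + p).descFactorial p : ℂ) * (k.descFactorial q : ℂ) := by
        exact_mod_cast congrArg (Nat.cast : ℕ → ℂ) h
      calc ((p + q)! : ℂ) * (r.map fun pq => ((pq.1 + pq.2)! : ℂ)).prod
            * (((k + p).choose (p + q) : ℂ)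
              * (r.map fun pq => (((k + pq.1).choose (pq.1 + pq.2) : ℕ) : ℂ)).prod)
          = (((p + q)! : ℂ) * ((k + p).choose (p + q) : ℂ))
            * ((r.map fun pq => ((pq.1 + pq.2)! : ℂ)).prod
              * (r.map fun pq => (((k + pq.1).choose (pq.1 + pq.2) : ℕ) : ℂ)).prod) := by ring
        _ = (((k + p).descFactorial p : ℂ) * (k.descFactorial q : ℂ))
            * ((r.map fun pq => (((k + pq.1).descFactorial pq.1 : ℕ) : ℂ)).prod
              * (r.map fun pq => ((k.descFactorial pq.2 : ℕ) : ℂ)).prod) := by rw [hC, ih]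
        _ = _ := by ring


/-- Bisymmetry of the normalized multiple Legendre polynomials: if the multiset of the
`p_j`'s and the multiset of the `q_j`'s of `L₂` are obtained from those of `L₁` by
(independent) permutations, then the normalized polynomials agree. -/
theorem Leg_bisymmetric (L₁ L₂ : List (ℕ × ℕ))
    (hp : (L₁.map Prod.fst).Perm (L₂.map Prod.fst))
    (hq : (L₁.map Prod.snd).Perm (L₂.map Prod.snd)) (z : ℂ) :
    (L₁.map fun pq => ((pq.1 + pq.2)! : ℂ)).prod * Leg L₁ z =
      (L₂.map fun pq => ((pq.1 + pq.2)! : ℂ)).prod * Leg L₂ z := by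
  have e : ∀ L : List (ℕ × ℕ), (L.map fun pq => ((pq.1 + pq.2)! : ℂ)).prod * Leg L z
      = (Polynomial.C ((L.map fun pq => ((pq.1 + pq.2)! : ℂ)).prod) * Pn L.reverse).eval z := by
    intro L
    rw [Leg, LegAux_eq, Polynomial.eval_mul, Polynomial.eval_C]
  rw [e L₁, e L₂]
  suffices hpoly : Polynomial.C ((L₁.map fun pq => ((pq.1 + pq.2)! : ℂ)).prod) * Pn L₁.reverse
      = Polynomial.C ((L₂.map fun pq => ((pq.1 + pq.2)! : ℂ)).prod) * Pn L₂.reverse by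
    rw [hpoly]
  apply TT_congr
  intro k
  rw [TT_C_mul, TT_C_mul, TT_Pn, TT_Pn]
  have hrev : ∀ (f : ℕ × ℕ → ℂ) (L : List (ℕ × ℕ)),
      (L.reverse.map f).prod = (L.map f).prod := by
    intro f L; rw [List.map_reverse, List.prod_reverse]
  rw [hrev, hrev, prod_eq_desc L₁ k, prod_eq_desc L₂ k]
  have hA : ∀ L : List (ℕ × ℕ),
      (L.map fun pq => (((k + pq.1).descFactorial pq.1 : ℕ) : ℂ)).prod
        = ((L.map Prod.fst).map fun p => (((k + p).descFactorial p : ℕ) : ℂ)).prod := by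
    intro L; rw [List.map_map]; rfl
  have hB : ∀ L : List (ℕ × ℕ),
      (L.map fun pq => ((k.descFactorial pq.2 : ℕ) : ℂ)).prod
        = ((L.map Prod.snd).map fun q => ((k.descFactorial q : ℕ) : ℂ)).prod := by
    intro L; rw [List.map_map]; rfl
  rw [hA, hA, hB, hB,
    (hp.map fun p => (((k + p).descFactorial p : ℕ) : ℂ)).prod_eq,
    (hq.map fun q => ((k.descFactorial q : ℕ) : ℂ)).prod_eq]
end

section
/- For nonnegative integers p_1,q_1,…,p_n,q_n and all z ∈ [0,1]: z^{-q_1}(1-z)^{-p_1} |L_n(p_1,q_1;…;p_n,q_n;z)| ≤ M! / ((p_1+q_1)!⋯(p_n+q_n)!), where M = Σ_{l=1}^n (p_l+q_l). (Equivalently, |L_n(p_1,q_1;…;p_n,q_n;z)| ≤ z^{q_1}(1-z)^{p_1} M!/((p_1+q_1)!⋯(p_n+q_n)!) for z ∈ [0,1].) -/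
open scoped Nat

/-- A "term": coefficient `c` and exponents `(i,j)`, denoting `c * z^i * (1-z)^j`. -/
def TEval (t : ℂ × ℕ × ℕ) (z : ℂ) : ℂ := t.1 * z ^ t.2.1 * (1 - z) ^ t.2.2

def LEval (l : List (ℂ × ℕ × ℕ)) (z : ℂ) : ℂ := (l.map fun t => TEval t z).sum

def TDer (t : ℂ × ℕ × ℕ) : List (ℂ × ℕ × ℕ) :=
  [((t.2.1 : ℂ) * t.1, t.2.1 - 1, t.2.2), (-(t.2.2 : ℂ) * t.1, t.2.1, t.2.2 - 1)]

def LDer (l : List (ℂ × ℕ × ℕ)) : List (ℂ × ℕ × ℕ) := l.flatMap TDer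

noncomputable def Csum (l : List (ℂ × ℕ × ℕ)) : ℝ := (l.map fun t => ‖t.1‖).sum

lemma Csum_nil : Csum [] = 0 := rfl

lemma Csum_cons (t l) : Csum (t :: l) = ‖t.1‖ + Csum l := by simp [Csum]

lemma Csum_nonneg (l) : 0 ≤ Csum l := by
  induction l with
  | nil => simp [Csum]
  | cons t l ih => rw [Csum_cons]; positivity

lemma LEval_nil (z : ℂ) : LEval [] z = 0 := rfl

lemma LEval_cons (t l z) : LEval (t :: l) z = TEval t z + LEval l z := by simp [LEval]

lemma LEval_append (l₁ l₂ : List (ℂ × ℕ × ℕ)) (z : ℂ) :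
    LEval (l₁ ++ l₂) z = LEval l₁ z + LEval l₂ z := by simp [LEval]

lemma Csum_append (l₁ l₂ : List (ℂ × ℕ × ℕ)) :
    Csum (l₁ ++ l₂) = Csum l₁ + Csum l₂ := by simp [Csum]

lemma hasDerivAt_TEval (t : ℂ × ℕ × ℕ) (z : ℂ) :
    HasDerivAt (fun x => TEval t x) (LEval (TDer t) z) z := by
  obtain ⟨c, i, j⟩ := t
  have h1 : HasDerivAt (fun x : ℂ => x ^ i) ((i : ℂ) * z ^ (i - 1)) z := hasDerivAt_pow i z
  have h2 : HasDerivAt (fun x : ℂ => (1 - x) ^ j)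
      (((j : ℂ) * (1 - z) ^ (j - 1)) * (-1)) z := by
    exact (hasDerivAt_pow j (1 - z)).comp z (((hasDerivAt_id z).const_sub 1))
  have h := (h1.mul h2).const_mul c
  have hf : (fun x => TEval (c, i, j) x) = fun y => c * (((fun x : ℂ => x ^ i) * fun x : ℂ => (1 - x) ^ j : ℂ → ℂ) y) := by
    funext x; simp [TEval, Pi.mul_apply]; ring
  rw [hf]
  refine h.congr_deriv ?_
  simp [LEval, TDer, TEval]; ring

lemma hasDerivAt_LEval (l : List (ℂ × ℕ × ℕ)) (z : ℂ) :
    HasDerivAt (fun x => LEval l x) (LEval (LDer l) z) z := by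
  induction l with
  | nil => simpa [LEval, LDer] using hasDerivAt_const z (0 : ℂ)
  | cons t l ih =>
    have := (hasDerivAt_TEval t z).add ih
    have he : LDer (t :: l) = TDer t ++ LDer l := by simp [LDer]
    rw [he, LEval_append]
    simp only [LEval_cons]; exact this

lemma iteratedDeriv_LEval (n : ℕ) (l : List (ℂ × ℕ × ℕ)) :
    iteratedDeriv n (fun z => LEval l z) = fun z => LEval (LDer^[n] l) z := by
  induction n with
  | zero => simp
  | succ n ih =>
    rw [iteratedDeriv_succ, ih, Function.iterate_succ_apply']
    funext z
    exact (hasDerivAt_LEval _ z).deriv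

lemma LEval_shift (a : ℂ) (m n : ℕ) (l : List (ℂ × ℕ × ℕ)) (z : ℂ) :
    LEval (l.map fun t => (a * t.1, m + t.2.1, n + t.2.2)) z
      = a * z ^ m * (1 - z) ^ n * LEval l z := by
  induction l with
  | nil => simp [LEval]
  | cons t l ih =>
    simp only [List.map_cons, LEval_cons, ih, TEval, pow_add]
    ring

lemma Csum_shift (a : ℂ) (m n : ℕ) (l : List (ℂ × ℕ × ℕ)) :
    Csum (l.map fun t => (a * t.1, m + t.2.1, n + t.2.2)) = ‖a‖ * Csum l := by
  induction l with
  | nil => simp [Csum]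
  | cons t l ih =>
    simp only [List.map_cons, Csum_cons, ih]
    simp [mul_add]

/-- DInvariant after `k` differentiation steps. -/
def DInv (N A B k : ℕ) (l : List (ℂ × ℕ × ℕ)) : Prop :=
  ∀ t ∈ l, t.1 ≠ 0 → t.2.1 + t.2.2 + k ≤ N ∧ A ≤ t.2.1 + k ∧ B ≤ t.2.2 + k

lemma DInv_LDer {N A B k : ℕ} {l : List (ℂ × ℕ × ℕ)} (h : DInv N A B k l) :
    DInv N A B (k + 1) (LDer l) := by
  intro t' ht' hne
  rw [LDer, List.mem_flatMap] at ht'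
  obtain ⟨t, htl, ht'⟩ := ht'
  obtain ⟨c, i, j⟩ := t
  simp only [TDer, List.mem_cons, List.mem_singleton] at ht'
  rcases ht' with rfl | rfl | h'
  · have hi : (i : ℂ) ≠ 0 := fun h0 => hne (by simp [h0])
    have hc : c ≠ 0 := fun h0 => hne (by simp [h0])
    have hi' : 1 ≤ i := Nat.one_le_iff_ne_zero.mpr (fun h0 => hi (by simp [h0]))
    obtain ⟨h1, h2, h3⟩ := h _ htl hc
    dsimp only at h1 h2 h3
    refine ⟨by simp; omega, by simp; omega, by simp; omega⟩
  · have hj : (j : ℂ) ≠ 0 := fun h0 => hne (by simp [h0])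
    have hc : c ≠ 0 := fun h0 => hne (by simp [h0])
    have hj' : 1 ≤ j := Nat.one_le_iff_ne_zero.mpr (fun h0 => hj (by simp [h0]))
    obtain ⟨h1, h2, h3⟩ := h _ htl hc
    dsimp only at h1 h2 h3
    refine ⟨by simp; omega, by simp; omega, by simp; omega⟩
  · exact absurd h' List.not_mem_nil

lemma Csum_LDer_le {N A B k : ℕ} {l : List (ℂ × ℕ × ℕ)} (h : DInv N A B k l) :
    Csum (LDer l) ≤ ((N - k : ℕ) : ℝ) * Csum l := by
  induction l with
  | nil => simp [LDer, Csum]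
  | cons t l ih =>
    have hl : DInv N A B k l := fun t' ht' => h t' (List.mem_cons_of_mem _ ht')
    have hrec := ih hl
    have he : LDer (t :: l) = TDer t ++ LDer l := by simp [LDer]
    rw [he, Csum_append, Csum_cons]
    obtain ⟨c, i, j⟩ := t
    have hterm : Csum (TDer (c, i, j)) ≤ ((N - k : ℕ) : ℝ) * ‖c‖ := by
      by_cases hc : c = 0
      · simp [TDer, Csum, hc]
      · obtain ⟨h1, _, _⟩ := h _ (List.mem_cons_self) hc
        dsimp only at h1
        have hij : i + j ≤ N - k := by omega
        have : Csum (TDer (c, i, j)) = ((i : ℝ) + j) * ‖c‖ := by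
          simp [TDer, Csum, map_mul]
          ring
        rw [this]
        have : ((i : ℝ) + j) ≤ ((N - k : ℕ) : ℝ) := by exact_mod_cast hij
        exact mul_le_mul_of_nonneg_right this (norm_nonneg c)
    calc Csum (TDer (c, i, j)) + Csum (LDer l)
        ≤ ((N - k : ℕ) : ℝ) * ‖c‖ + ((N - k : ℕ) : ℝ) * Csum l := by
          exact add_le_add hterm hrec
      _ = ((N - k : ℕ) : ℝ) * (‖c‖ + Csum l) := by ring

lemma DInv_iter {N A B : ℕ} {l : List (ℂ × ℕ × ℕ)} (h : DInv N A B 0 l) (s : ℕ) :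
    DInv N A B s (LDer^[s] l) := by
  induction s with
  | zero => simpa using h
  | succ s ih => rw [Function.iterate_succ_apply']; exact DInv_LDer ih

lemma Csum_iter_le {N A B : ℕ} {l : List (ℂ × ℕ × ℕ)} (h : DInv N A B 0 l) (s : ℕ) :
    Csum (LDer^[s] l) ≤ (N.descFactorial s : ℝ) * Csum l := by
  induction s with
  | zero => simp
  | succ s ih =>
    rw [Function.iterate_succ_apply']
    calc Csum (LDer (LDer^[s] l)) ≤ ((N - s : ℕ) : ℝ) * Csum (LDer^[s] l) :=
          Csum_LDer_le (DInv_iter h s)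
      _ ≤ ((N - s : ℕ) : ℝ) * ((N.descFactorial s : ℝ) * Csum l) := by
          apply mul_le_mul_of_nonneg_left ih (by positivity)
      _ = (N.descFactorial (s + 1) : ℝ) * Csum l := by
          rw [Nat.descFactorial_succ]; push_cast; ring

/-- `f` is represented by a sum of terms `c·z^i(1-z)^j` with `q₁ ≤ i`, `p₁ ≤ j`,
`i + j ≤ M`, and total coefficient mass at most `B`. -/
def Good (q₁ p₁ M : ℕ) (B : ℝ) (f : ℂ → ℂ) : Prop :=
  ∃ l : List (ℂ × ℕ × ℕ),
    (∀ t ∈ l, t.1 ≠ 0 → q₁ ≤ t.2.1 ∧ p₁ ≤ t.2.2 ∧ t.2.1 + t.2.2 ≤ M) ∧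
    Csum l ≤ B ∧ ∀ z, f z = LEval l z

lemma Good.mono {q₁ p₁ M : ℕ} {B : ℝ} {f : ℂ → ℂ} (h : Good q₁ p₁ M B f)
    {q₁' p₁' M' : ℕ} {B' : ℝ} (hq : q₁' ≤ q₁) (hp : p₁' ≤ p₁) (hM : M ≤ M') (hB : B ≤ B') :
    Good q₁' p₁' M' B' f := by
  obtain ⟨l, hs, hc, he⟩ := h
  exact ⟨l, fun t ht hne => by obtain ⟨a, b, c⟩ := hs t ht hne; exact ⟨hq.trans a, hp.trans b, c.trans hM⟩,
    hc.trans hB, he⟩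

lemma Good.congr {q₁ p₁ M : ℕ} {B : ℝ} {f g : ℂ → ℂ} (h : Good q₁ p₁ M B f)
    (hfg : ∀ z, g z = f z) : Good q₁ p₁ M B g := by
  obtain ⟨l, hs, hc, he⟩ := h
  exact ⟨l, hs, hc, fun z => (hfg z).trans (he z)⟩

lemma Good.one : Good 0 0 0 1 (fun _ => 1) := by
  refine ⟨[(1, 0, 0)], ?_, ?_, ?_⟩
  · intro t ht _; simp at ht; simp [ht]
  · simp [Csum]
  · intro z; simp [LEval, TEval]

lemma Good.step {q₁ p₁ M : ℕ} {B : ℝ} {f : ℂ → ℂ} (hB : 0 ≤ B) (h : Good q₁ p₁ M B f) (p q : ℕ) :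
    Good (max q q₁) (max p p₁) (M + (p + q)) (B * ((M + (p + q)).choose (p + q)))
      (fun z => z ^ q * (1 - z) ^ p *
        ((1 / ((p + q)! : ℂ)) *
          iteratedDeriv (p + q) (fun x : ℂ => x ^ p * (1 - x) ^ q * f x) z)) := by
  obtain ⟨l, hs, hc, he⟩ := h
  set P := p + q with hP
  set l₁ := l.map fun t => ((1 : ℂ) * t.1, p + t.2.1, q + t.2.2) with hl₁
  have hfun : (fun x : ℂ => x ^ p * (1 - x) ^ q * f x) = fun x => LEval l₁ x := by
    funext x
    rw [he x, hl₁, LEval_shift]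
    ring
  set l₂ := LDer^[P] l₁ with hl₂
  set l₃ := l₂.map fun t => ((1 / (P ! : ℂ)) * t.1, q + t.2.1, p + t.2.2) with hl₃
  -- invariant for l₁ at stage 0
  have hinv₁ : DInv (M + P) (p + q₁) (q + p₁) 0 l₁ := by
    intro t' ht' hne
    rw [hl₁, List.mem_map] at ht'
    obtain ⟨t, htl, rfl⟩ := ht'
    have hne' : t.1 ≠ 0 := fun h0 => hne (by simp [h0])
    obtain ⟨a, b, c⟩ := hs t htl hne'
    dsimp only
    omega
  have hinv₂ : DInv (M + P) (p + q₁) (q + p₁) P l₂ := DInv_iter hinv₁ P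
  refine ⟨l₃, ?_, ?_, ?_⟩
  · intro t' ht' hne
    rw [hl₃, List.mem_map] at ht'
    obtain ⟨t, htl, rfl⟩ := ht'
    have hne' : t.1 ≠ 0 := by
      intro h0
      exact hne (by simp [h0])
    obtain ⟨a, b, c⟩ := hinv₂ t htl hne'
    dsimp only
    omega
  · have h1 : Csum l₁ = Csum l := by
      rw [hl₁, Csum_shift]; simp
    have h2 : Csum l₂ ≤ ((M + P).descFactorial P : ℝ) * Csum l := by
      rw [← h1]; exact Csum_iter_le hinv₁ P
    have h3 : Csum l₃ = (1 / (P ! : ℝ)) * Csum l₂ := by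
      rw [hl₃, Csum_shift]
      congr 1
      rw [norm_div]
      simp
    rw [h3]
    have hfac : (0:ℝ) < (P ! : ℝ) := by exact_mod_cast P.factorial_pos
    have hdesc : ((M + P).descFactorial P : ℝ) = (P ! : ℝ) * ((M + P).choose P : ℝ) := by
      exact_mod_cast congrArg (Nat.cast : ℕ → ℝ) (Nat.descFactorial_eq_factorial_mul_choose (M + P) P)
    calc (1 / (P ! : ℝ)) * Csum l₂
        ≤ (1 / (P ! : ℝ)) * (((M + P).descFactorial P : ℝ) * Csum l) := by
          apply mul_le_mul_of_nonneg_left h2 (by positivity)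
      _ = ((M + P).choose P : ℝ) * Csum l := by
          rw [hdesc]; field_simp
      _ ≤ B * ((M + P).choose P : ℝ) := by
          rw [mul_comm]
          exact mul_le_mul_of_nonneg_right hc (by positivity)
  · intro z
    have h4 : iteratedDeriv P (fun x : ℂ => x ^ p * (1 - x) ^ q * f x) z = LEval l₂ z := by
      rw [hfun, hl₂, iteratedDeriv_LEval]
    dsimp only
    rw [h4, hl₃, LEval_shift]
    ring

lemma fprod_pos (L : List (ℕ × ℕ)) :
    0 < ((L.map fun pq => ((pq.1 + pq.2)! : ℝ)).prod) := by
  induction L with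
  | nil => simp
  | cons a L ih =>
    simp only [List.map_cons, List.prod_cons]
    exact mul_pos (by exact_mod_cast (a.1 + a.2).factorial_pos) ih

lemma legAux_good (ℓ : List (ℕ × ℕ)) (p₀ q₀ : ℕ) :
    Good q₀ p₀ (((ℓ ++ [(p₀, q₀)]).map fun pq => pq.1 + pq.2).sum)
      (((((ℓ ++ [(p₀, q₀)]).map fun pq => pq.1 + pq.2).sum)! : ℝ) /
        (((ℓ ++ [(p₀, q₀)]).map fun pq => ((pq.1 + pq.2)! : ℝ)).prod))
      (LegAux (ℓ ++ [(p₀, q₀)])) := by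
  induction ℓ with
  | nil =>
    have h := Good.one.step zero_le_one p₀ q₀
    have hcongr : ∀ z : ℂ, LegAux ([] ++ [(p₀, q₀)]) z =
        z ^ q₀ * (1 - z) ^ p₀ *
          ((1 / ((p₀ + q₀)! : ℂ)) *
            iteratedDeriv (p₀ + q₀) (fun x : ℂ => x ^ p₀ * (1 - x) ^ q₀ * (fun _ : ℂ => (1 : ℂ)) x) z) := by
      intro z
      have hfun : (fun x : ℂ => x ^ p₀ * (1 - x) ^ q₀ * LegAux [] x) =
          (fun x : ℂ => x ^ p₀ * (1 - x) ^ q₀ * (fun _ : ℂ => (1 : ℂ)) x) := by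
        funext x; simp [LegAux]
      simp only [List.nil_append, LegAux, hfun]
    refine (h.congr hcongr).mono (by simp) (by simp) (by simp) ?_
    have hfz : (((p₀ + q₀)!) : ℝ) ≠ 0 := by exact_mod_cast (p₀ + q₀).factorial_ne_zero
    simp [Nat.choose_self, div_self hfz]
  | cons pq ℓ'' ih =>
    obtain ⟨p, q⟩ := pq
    set L' := ℓ'' ++ [(p₀, q₀)] with hL'
    set M' := ((L'.map fun pq => pq.1 + pq.2).sum) with hM'
    set Pr := ((L'.map fun pq => ((pq.1 + pq.2)! : ℝ)).prod) with hPr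
    have hPrpos : (0:ℝ) < Pr := by rw [hPr]; exact fprod_pos L'
    have hB' : (0:ℝ) ≤ (M' ! : ℝ) / Pr :=
      div_nonneg (Nat.cast_nonneg _) hPrpos.le
    have h := ih.step hB' p q
    have hcongr : ∀ z : ℂ, LegAux (((p, q) :: ℓ'') ++ [(p₀, q₀)]) z =
        z ^ q * (1 - z) ^ p *
          ((1 / ((p + q)! : ℂ)) *
            iteratedDeriv (p + q) (fun x : ℂ => x ^ p * (1 - x) ^ q * LegAux L' x) z) := by
      intro z
      rfl
    refine (h.congr hcongr).mono (le_max_right _ _) (le_max_right _ _) ?_ ?_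
    · rw [List.cons_append, List.map_cons, List.sum_cons, ← hL', ← hM']; omega
    · have hprodpos := fprod_pos L'
      have hfacpos : (0:ℝ) < ((p + q)! : ℝ) := by exact_mod_cast (p + q).factorial_pos
      have key : ((M' + (p + q)).choose (p + q)) * (p + q)! * M' ! = (M' + (p + q))! := by
        have hle : p + q ≤ M' + (p + q) := by omega
        have h2 := Nat.choose_mul_factorial_mul_factorial hle
        simpa using h2
      have keyR : ((M' + (p + q)).choose (p + q) : ℝ) * ((p + q)! : ℝ) * (M' ! : ℝ)
          = ((M' + (p + q))! : ℝ) := by exact_mod_cast key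
      have hMsum : ((((p, q) :: ℓ'') ++ [(p₀, q₀)]).map fun pq => pq.1 + pq.2).sum
          = (p + q) + M' := by rw [List.cons_append, List.map_cons, List.sum_cons, ← hL', ← hM']
      have hPsum : ((((p, q) :: ℓ'') ++ [(p₀, q₀)]).map fun pq => ((pq.1 + pq.2)! : ℝ)).prod
          = ((p + q)! : ℝ) * Pr := by rw [List.cons_append, List.map_cons, List.prod_cons, ← hL', ← hPr]
      rw [hMsum, hPsum]
      apply le_of_eq
      have : (p + q) + M' = M' + (p + q) := by omega
      rw [this]
      rw [← keyR]
      field_simp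

lemma LEval_bound (l : List (ℂ × ℕ × ℕ)) (q₁ p₁ : ℕ) (z : ℝ)
    (hz0 : 0 ≤ z) (hz1 : z ≤ 1)
    (hs : ∀ t ∈ l, t.1 ≠ 0 → q₁ ≤ t.2.1 ∧ p₁ ≤ t.2.2) :
    ‖LEval l (z : ℂ)‖ ≤ Csum l * (z ^ q₁ * (1 - z) ^ p₁) := by
  induction l with
  | nil => simp [LEval, Csum]
  | cons t l ih =>
    have hrec := ih (fun t' ht' => hs t' (List.mem_cons_of_mem _ ht'))
    rw [LEval_cons, Csum_cons]
    refine (norm_add_le _ _).trans ?_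
    have hterm : ‖TEval t (z : ℂ)‖ ≤ ‖t.1‖ * (z ^ q₁ * (1 - z) ^ p₁) := by
      obtain ⟨c, i, j⟩ := t
      by_cases hcz : c = 0
      · have h1 : (0:ℝ) ≤ 1 - z := by linarith
        simp only [TEval, hcz, zero_mul, norm_zero]
        have : (0:ℝ) ≤ z ^ q₁ * (1 - z) ^ p₁ :=
          mul_nonneg (pow_nonneg hz0 _) (pow_nonneg h1 _)
        simpa using this
      · obtain ⟨h1, h2⟩ := hs _ (List.mem_cons_self) hcz
        dsimp only at h1 h2 ⊢
        have hz' : ((1:ℂ) - (z:ℂ)) = ((1 - z : ℝ) : ℂ) := by push_cast; ring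
        have e1 : ‖TEval (c, i, j) (z : ℂ)‖
            = ‖c‖ * (z ^ i * (1 - z) ^ j) := by
          rw [show TEval (c, i, j) (z : ℂ) = c * (z : ℂ) ^ i * ((1:ℂ) - (z:ℂ)) ^ j from rfl, hz']
          rw [norm_mul, norm_mul, norm_pow, norm_pow, Complex.norm_real, Complex.norm_real,
              Real.norm_eq_abs, Real.norm_eq_abs,
            abs_of_nonneg hz0, abs_of_nonneg (by linarith)]
          ring
        rw [e1]
        have b1 : z ^ i ≤ z ^ q₁ := pow_le_pow_of_le_one hz0 hz1 h1
        have b2 : (1 - z) ^ j ≤ (1 - z) ^ p₁ := pow_le_pow_of_le_one (by linarith) (by linarith) h2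
        have : z ^ i * (1 - z) ^ j ≤ z ^ q₁ * (1 - z) ^ p₁ := by
          exact mul_le_mul b1 b2 (pow_nonneg (by linarith) _) (pow_nonneg hz0 _)
        exact mul_le_mul_of_nonneg_left this (norm_nonneg c)
    calc ‖TEval t (z:ℂ)‖ + ‖LEval l (z:ℂ)‖
        ≤ ‖t.1‖ * (z ^ q₁ * (1 - z) ^ p₁) + Csum l * (z ^ q₁ * (1 - z) ^ p₁) :=
          add_le_add hterm hrec
      _ = (‖t.1‖ + Csum l) * (z ^ q₁ * (1 - z) ^ p₁) := by ring

theorem Leg_bound_unit_interval (p₁ q₁ : ℕ) (rest : List (ℕ × ℕ)) (z : ℝ)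
    (hz : z ∈ Set.Icc (0 : ℝ) 1) :
    ‖Leg ((p₁, q₁) :: rest) (z : ℂ)‖ ≤
      z ^ q₁ * (1 - z) ^ p₁ *
        ((((p₁, q₁) :: rest).map fun pq => pq.1 + pq.2).sum ! /
          ((((p₁, q₁) :: rest).map fun pq => ((pq.1 + pq.2)! : ℝ)).prod)) := by
  obtain ⟨hz0, hz1⟩ := hz
  have hg := legAux_good rest.reverse p₁ q₁
  set L := rest.reverse ++ [(p₁, q₁)] with hLdef
  obtain ⟨l, hs, hc, he⟩ := hg
  have hL : Leg ((p₁, q₁) :: rest) (z : ℂ) = LEval l (z : ℂ) := by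
    rw [Leg, List.reverse_cons, ← hLdef, he]
  rw [hL]
  have hb := LEval_bound l q₁ p₁ z hz0 hz1 (fun t ht hne => ⟨(hs t ht hne).1, (hs t ht hne).2.1⟩)
  have hMeq : ((L.map fun pq => pq.1 + pq.2).sum) = (((p₁, q₁) :: rest).map fun pq => pq.1 + pq.2).sum := by
    rw [hLdef, List.map_append, List.sum_append, List.map_reverse, List.sum_reverse,
      List.map_cons, List.sum_cons]
    simp
    omega
  have hPeq : ((L.map fun pq => ((pq.1 + pq.2)! : ℝ)).prod)
      = (((p₁, q₁) :: rest).map fun pq => ((pq.1 + pq.2)! : ℝ)).prod := by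
    rw [hLdef, List.map_append, List.prod_append, List.map_reverse, List.prod_reverse,
      List.map_cons, List.prod_cons]
    simp
    ring
  rw [hMeq, hPeq] at hc
  have hpos : (0:ℝ) ≤ z ^ q₁ * (1 - z) ^ p₁ :=
    mul_nonneg (pow_nonneg hz0 _) (pow_nonneg (by linarith) _)
  calc ‖LEval l (z:ℂ)‖ ≤ Csum l * (z ^ q₁ * (1 - z) ^ p₁) := hb
    _ ≤ ((((p₁, q₁) :: rest).map fun pq => pq.1 + pq.2).sum ! /
          ((((p₁, q₁) :: rest).map fun pq => ((pq.1 + pq.2)! : ℝ)).prod)) * (z ^ q₁ * (1 - z) ^ p₁) :=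
        mul_le_mul_of_nonneg_right hc hpos
    _ = z ^ q₁ * (1 - z) ^ p₁ *
        ((((p₁, q₁) :: rest).map fun pq => pq.1 + pq.2).sum ! /
          ((((p₁, q₁) :: rest).map fun pq => ((pq.1 + pq.2)! : ℝ)).prod)) := by ring
end
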